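/- arXiv:1403.7060 — 3 statements merged into one kernel-verified Lean document; each statement's English description precedes it below -/
import Mathlib

section
/- Let $(V,L)$ be a Lorentz-Minkowski space, i.e. $V$ a finite-dimensional real vector space and $L\colon V\setminus\{0\}\to\mathbb{R}$ a $C^2$ function positively homogeneous of degree $2$ whose fiberwise Hessian $g_v$ is nondegenerate of Lorentzian signature $(-,+,\dots,+)$ for all $v\neq 0$. Then the set of timelike vectors $I=\{v\neq 0: g_v(v,v)<0\}$ is nonempty. -/
open Set Filter Topology

/-- The fiberwise Hessian `g_v(w,u)` of a Finsler Lagrangian `L`. -/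
noncomputable def FinslerHess {m : ℕ} (L : EuclideanSpace ℝ (Fin m) → ℝ)
    (v w u : EuclideanSpace ℝ (Fin m)) : ℝ :=
  fderiv ℝ (fderiv ℝ L) v w u

variable {E : Type*} [NormedAddCommGroup E] [NormedSpace ℝ E]

lemma line_hasDerivAt {L : E → ℝ} {v w : E} {t : ℝ}
    (h : ContDiffAt ℝ 2 L (v + t • w)) :
    HasDerivAt (fun s : ℝ => L (v + s • w)) (fderiv ℝ L (v + t • w) w) t := by
  have hc : HasDerivAt (fun s : ℝ => v + s • w) w t := by
    simpa using ((hasDerivAt_id t).smul_const w).const_add v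
  have hL : HasFDerivAt L (fderiv ℝ L (v + t • w)) (v + t • w) :=
    (h.differentiableAt (by norm_num)).hasFDerivAt
  exact hL.comp_hasDerivAt t hc

lemma line_hasDerivAt2 {L : E → ℝ} {v w : E}
    (h : ContDiffAt ℝ 2 L v) :
    HasDerivAt (fun s : ℝ => fderiv ℝ L (v + s • w) w)
      (fderiv ℝ (fderiv ℝ L) v w w) 0 := by
  have hc : HasDerivAt (fun s : ℝ => v + s • w) w 0 := by
    simpa using ((hasDerivAt_id (0:ℝ)).smul_const w).const_add v
  have hF : ContDiffAt ℝ 1 (fderiv ℝ L) v := h.fderiv_right (m := 1) (by norm_num)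
  have hF' : HasFDerivAt (fderiv ℝ L) (fderiv ℝ (fderiv ℝ L) v) v :=
    (hF.differentiableAt (by norm_num)).hasFDerivAt
  have hF'' : HasFDerivAt (fderiv ℝ L) (fderiv ℝ (fderiv ℝ L) v) (v + (0:ℝ) • w) := by
    simpa using hF'
  have h1 : HasDerivAt (fun s : ℝ => fderiv ℝ L (v + s • w))
      (fderiv ℝ (fderiv ℝ L) v w) 0 := hF''.comp_hasDerivAt 0 hc
  simpa [Function.comp_def] using
    (ContinuousLinearMap.apply ℝ ℝ w).hasFDerivAt.comp_hasDerivAt 0 h1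

/-- Second derivative test: at an interior local minimum the second derivative
is nonnegative. -/
lemma isLocalMin_second_deriv_nonneg {f : ℝ → ℝ} {D : ℝ} (hmin : IsLocalMin f 0)
    (hd : ∀ᶠ t in 𝓝 (0:ℝ), DifferentiableAt ℝ f t)
    (hD : HasDerivAt (deriv f) D 0) : 0 ≤ D := by
  by_contra hneg
  push_neg at hneg
  have h0 : deriv f 0 = 0 := hmin.deriv_eq_zero
  have hslope : Tendsto (slope (deriv f) 0) (𝓝[≠] 0) (𝓝 D) :=
    hasDerivAt_iff_tendsto_slope.1 hD
  have hev : ∀ᶠ t in 𝓝[≠] (0:ℝ), slope (deriv f) 0 t < 0 :=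
    hslope.eventually_lt_const hneg
  -- extract a radius
  have hmem : ∀ᶠ t in 𝓝 (0:ℝ), f 0 ≤ f t := hmin
  have hall : ∀ᶠ t in 𝓝 (0:ℝ), (t ≠ 0 → slope (deriv f) 0 t < 0) ∧ f 0 ≤ f t ∧
      DifferentiableAt ℝ f t := by
    have h1 := (eventually_nhdsWithin_iff.1 hev)
    filter_upwards [h1, hmem, hd] with t ht h2 h3 using ⟨fun h => ht h, h2, h3⟩
  obtain ⟨δ, hδ, hball⟩ := Metric.eventually_nhds_iff_ball.1 hall
  have hsub : Icc (0:ℝ) (δ/2) ⊆ Metric.ball (0:ℝ) δ := by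
    intro t ht
    simp only [Metric.mem_ball, Real.dist_eq, sub_zero]
    rw [abs_of_nonneg ht.1]
    linarith [ht.2]
  have hcont : ContinuousOn f (Icc (0:ℝ) (δ/2)) := fun t ht =>
    ((hball t (hsub ht)).2.2.continuousAt).continuousWithinAt
  have hderiv : ∀ t ∈ interior (Icc (0:ℝ) (δ/2)), deriv f t < 0 := by
    intro t ht
    rw [interior_Icc] at ht
    have htne : t ≠ 0 := ne_of_gt ht.1
    have := (hball t (hsub ⟨le_of_lt ht.1, le_of_lt ht.2⟩)).1 htne
    rw [slope_def_field] at this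
    have : (deriv f t - deriv f 0) / (t - 0) < 0 := by
      simpa [div_eq_inv_mul] using this
    rw [h0, sub_zero, sub_zero] at this
    have := (div_neg_iff.1 this)
    rcases this with h | h
    · linarith [h.2, ht.1]
    · exact h.1
  have hanti : StrictAntiOn f (Icc (0:ℝ) (δ/2)) :=
    strictAntiOn_of_deriv_neg (convex_Icc _ _) hcont hderiv
  have hlt : f (δ/2) < f 0 :=
    hanti (by constructor <;> linarith) (by constructor <;> linarith) (by linarith)
  have hge : f 0 ≤ f (δ/2) := (hball (δ/2) (hsub (by constructor <;> linarith))).2.1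
  linarith

lemma eventually_line_ne {E : Type*} [NormedAddCommGroup E] [NormedSpace ℝ E]
    (v w : E) (hv : v ≠ 0) : ∀ᶠ t in 𝓝 (0:ℝ), v + t • w ≠ 0 := by
  have hc : Continuous (fun t : ℝ => v + t • w) := by continuity
  have : ContinuousAt (fun t : ℝ => v + t • w) 0 := hc.continuousAt
  have h0 : (fun t : ℝ => v + t • w) 0 ∈ ({0}ᶜ : Set E) := by simpa using hv
  filter_upwards [this.preimage_mem_nhds (isOpen_compl_singleton.mem_nhds h0)] with t ht
  simpa using ht

lemma hess_hasDerivAt {E : Type*} [NormedAddCommGroup E] [NormedSpace ℝ E]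
    {L : E → ℝ} (hC2 : ContDiffOn ℝ 2 L {(0:E)}ᶜ) (v w : E) (hv : v ≠ 0) :
    HasDerivAt (deriv (fun t : ℝ => L (v + t • w)))
      (fderiv ℝ (fderiv ℝ L) v w w) 0 := by
  have hCA : ∀ x : E, x ≠ 0 → ContDiffAt ℝ 2 L x := fun x hx =>
    hC2.contDiffAt (isOpen_compl_singleton.mem_nhds (by simpa using hx))
  have hee : (fun t : ℝ => fderiv ℝ L (v + t • w) w) =ᶠ[𝓝 (0:ℝ)]
      deriv (fun t : ℝ => L (v + t • w)) := by
    filter_upwards [eventually_line_ne v w hv] with t ht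
    exact (line_hasDerivAt (hCA _ ht)).deriv.symm
  exact (line_hasDerivAt2 (hCA v hv)).congr_of_eventuallyEq hee.symm

/-- In a Lorentz-Minkowski space, the set of timelike vectors is nonempty. -/
theorem timelike_nonempty (n : ℕ) (L : EuclideanSpace ℝ (Fin (n + 1)) → ℝ)
    (hC2 : ContDiffOn ℝ 2 L {(0 : EuclideanSpace ℝ (Fin (n + 1)))}ᶜ)
    (hhom : ∀ s : ℝ, 0 < s → ∀ v, L (s • v) = s ^ 2 * L v)
    (hLor : ∀ v : EuclideanSpace ℝ (Fin (n + 1)), v ≠ 0 →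
      ∃ φ : EuclideanSpace ℝ (Fin (n + 1)) ≃ₗ[ℝ] ℝ × EuclideanSpace ℝ (Fin n),
        ∀ w u, FinslerHess L v w u
          = -((φ w).1 * (φ u).1) + (inner ℝ (φ w).2 (φ u).2 : ℝ)) :
    ({v : EuclideanSpace ℝ (Fin (n + 1)) | v ≠ 0 ∧ FinslerHess L v v v < 0}).Nonempty := by
  have hCA : ∀ x : EuclideanSpace ℝ (Fin (n + 1)), x ≠ 0 → ContDiffAt ℝ 2 L x := fun x hx =>
    hC2.contDiffAt (isOpen_compl_singleton.mem_nhds (by simpa using hx))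
  -- minimizer on the unit sphere
  obtain ⟨v, hvs, hvmin⟩ : ∃ v ∈ Metric.sphere (0:EuclideanSpace ℝ (Fin (n + 1))) 1, IsMinOn L (Metric.sphere (0:EuclideanSpace ℝ (Fin (n + 1))) 1) v := by
    refine (isCompact_sphere (0:EuclideanSpace ℝ (Fin (n + 1))) 1).exists_isMinOn
      (NormedSpace.sphere_nonempty.mpr (by norm_num)) ?_
    intro x hx
    have hx0 : x ≠ 0 := by
      intro h; rw [Metric.mem_sphere] at hx; simp [h] at hx
    exact (hCA x hx0).continuousAt.continuousWithinAt
  have hv1 : ‖v‖ = 1 := by simpa using hvs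
  have hv0 : v ≠ 0 := by intro h; rw [h] at hv1; simp at hv1
  set m := L v with hm
  -- global lower bound from homogeneity
  have hlow : ∀ x : EuclideanSpace ℝ (Fin (n + 1)), x ≠ 0 → ‖x‖ ^ 2 * m ≤ L x := by
    intro x hx
    have hnx : (0:ℝ) < ‖x‖ := norm_pos_iff.mpr hx
    have hu : ‖x‖⁻¹ • x ∈ Metric.sphere (0:EuclideanSpace ℝ (Fin (n + 1))) 1 := by
      simp [norm_smul, abs_of_pos (inv_pos.mpr hnx), inv_mul_cancel₀ (ne_of_gt hnx)]
    have h1 : L (‖x‖ • (‖x‖⁻¹ • x)) = ‖x‖ ^ 2 * L (‖x‖⁻¹ • x) := hhom ‖x‖ hnx _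
    rw [smul_inv_smul₀ (ne_of_gt hnx)] at h1
    rw [h1]
    exact mul_le_mul_of_nonneg_left (hvmin hu) (by positivity)
  -- key inequality : second derivative test at the minimizer
  have key : ∀ w : EuclideanSpace ℝ (Fin (n + 1)), 2 * m * ‖w‖ ^ 2 ≤ FinslerHess L v w w := by
    intro w
    set c : ℝ := inner ℝ v w with hc
    set q : ℝ := ‖w‖ ^ 2 with hq
    set g : ℝ → ℝ := fun t => L (v + t • w) - (1 + 2 * t * c + t ^ 2 * q) * m with hg
    have hnorm : ∀ t : ℝ, ‖v + t • w‖ ^ 2 = 1 + 2 * t * c + t ^ 2 * q := by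
      intro t
      rw [norm_add_sq_real, hv1, real_inner_smul_right, norm_smul]
      simp only [Real.norm_eq_abs, mul_pow, sq_abs, one_pow]
      ring
    have hmin : IsLocalMin g 0 := by
      filter_upwards [eventually_line_ne v w hv0] with t ht
      have := hlow _ ht
      rw [hnorm t] at this
      simp only [hg, zero_smul, add_zero]
      nlinarith [this, hm]
    -- the derivative of the polynomial part
    have hp' : ∀ t : ℝ, HasDerivAt (fun t : ℝ => (1 + 2 * t * c + t ^ 2 * q) * m)
        ((2 * c + 2 * t * q) * m) t := by
      intro t
      have h1 : HasDerivAt (fun t : ℝ => 2 * t * c) (2 * c) t := by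
        simpa using ((hasDerivAt_id t).const_mul 2).mul_const c
      have h2 : HasDerivAt (fun t : ℝ => t ^ 2 * q) (2 * t * q) t := by
        simpa using (hasDerivAt_pow 2 t).mul_const q
      simpa using ((h1.const_add 1).add h2).mul_const m
    -- differentiability near 0
    have hdiff : ∀ᶠ t in 𝓝 (0:ℝ), DifferentiableAt ℝ g t := by
      filter_upwards [eventually_line_ne v w hv0] with t ht
      have h1 : DifferentiableAt ℝ (fun t : ℝ => L (v + t • w)) t :=
        (line_hasDerivAt (hCA _ ht)).differentiableAt
      simp only [hg]
      exact h1.sub (hp' t).differentiableAt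
    -- deriv g eventually
    have hdg : (fun t : ℝ => fderiv ℝ L (v + t • w) w - (2 * c + 2 * t * q) * m)
        =ᶠ[𝓝 (0:ℝ)] deriv g := by
      filter_upwards [eventually_line_ne v w hv0] with t ht
      exact ((line_hasDerivAt (hCA _ ht)).sub (hp' t)).deriv.symm
    have hG : HasDerivAt (fun t : ℝ => fderiv ℝ L (v + t • w) w - (2 * c + 2 * t * q) * m)
        (FinslerHess L v w w - 2 * q * m) 0 := by
      have h2 : HasDerivAt (fun t : ℝ => (2 * c + 2 * t * q) * m) (2 * q * m) 0 := by
        have : HasDerivAt (fun t : ℝ => 2 * t * q) (2 * q) 0 := by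
          simpa using ((hasDerivAt_id (0:ℝ)).const_mul 2).mul_const q
        simpa using (this.const_add (2 * c)).mul_const m
      exact (line_hasDerivAt2 (hCA v hv0)).sub h2
    have hD : HasDerivAt (deriv g) (FinslerHess L v w w - 2 * q * m) 0 :=
      hG.congr_of_eventuallyEq hdg.symm
    have := isLocalMin_second_deriv_nonneg hmin hdiff hD
    rw [hq] at this ⊢
    linarith
  -- Euler relation : Hess v v v = 2 * m
  have hEuler : FinslerHess L v v v = 2 * m := by
    have hfe : (fun t : ℝ => L (v + t • v)) =ᶠ[𝓝 (0:ℝ)]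
        (fun t : ℝ => (1 + t) ^ 2 * m) := by
      filter_upwards [eventually_gt_nhds (show (-1:ℝ) < 0 by norm_num)] with t ht
      have h1 : v + t • v = (1 + t) • v := by rw [add_smul, one_smul]
      rw [h1, hhom (1 + t) (by linarith) v]
    have hq2 : ∀ t : ℝ, HasDerivAt (fun t : ℝ => (1 + t) ^ 2 * m) (2 * (1 + t) * m) t := by
      intro t
      have := (((hasDerivAt_id t).const_add 1).pow 2).mul_const m
      simpa [mul_comm] using this
    have hderivq : deriv (fun t : ℝ => (1 + t) ^ 2 * m) = fun t => 2 * (1 + t) * m := by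
      funext t; exact (hq2 t).deriv
    have h2 : HasDerivAt (deriv (fun t : ℝ => (1 + t) ^ 2 * m)) (2 * m) 0 := by
      rw [hderivq]
      have : HasDerivAt (fun t : ℝ => 2 * (1 + t) * m) (2 * m) 0 := by
        have h3 : HasDerivAt (fun t : ℝ => 2 * (1 + t)) 2 0 := by
          simpa using ((hasDerivAt_id (0:ℝ)).const_add 1).const_mul 2
        simpa using h3.mul_const m
      exact this
    have h4 : HasDerivAt (deriv (fun t : ℝ => L (v + t • v))) (2 * m) 0 :=
      h2.congr_of_eventuallyEq hfe.deriv
    exact (hess_hasDerivAt hC2 v v hv0).unique h4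
  -- Lorentz signature gives a negative direction
  obtain ⟨φ, hφ⟩ := hLor v hv0
  set w : EuclideanSpace ℝ (Fin (n + 1)) := φ.symm (1, 0) with hw
  have hww : FinslerHess L v w w = -1 := by
    rw [hφ w w, hw, LinearEquiv.apply_symm_apply]
    simp
  have hkw := key w
  rw [hww] at hkw
  have hm0 : m < 0 := by nlinarith [sq_nonneg ‖w‖]
  exact ⟨v, hv0, by rw [hEuler]; linarith⟩
end

section
/- Let $(V,L)$ be a Lorentz-Minkowski space and for $c>0$ let $J(c)=\{v\neq 0: g_v(v,v)\le -c^2\}$. Then every connected component of $J(c)$ is strictly convex: for distinct $v_1,v_2$ in the same component and $\alpha\in(0,1)$, the point $(1-\alpha)v_1+\alpha v_2$ lies in the interior of that component, in particular $2L((1-\alpha)v_1+\alpha v_2)< -c^2$. -/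
open Set

namespace JcAux

open scoped RealInnerProductSpace

section Basic

variable {m : ℕ} {L : EuclideanSpace ℝ (Fin m) → ℝ}

lemma L_zero (hhom : ∀ s : ℝ, 0 < s → ∀ v, L (s • v) = s ^ 2 * L v) : L 0 = 0 := by
  have h := hhom 2 (by norm_num) 0
  rw [smul_zero] at h
  nlinarith [h]

lemma hasF (hC2 : ContDiffOn ℝ 2 L {(0 : EuclideanSpace ℝ (Fin m))}ᶜ)
    {v : EuclideanSpace ℝ (Fin m)} (hv : v ≠ 0) : HasFDerivAt L (fderiv ℝ L v) v :=
  (((hC2.contDiffAt (isOpen_compl_singleton.mem_nhds hv))).differentiableAt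
    (by norm_num)).hasFDerivAt

lemma hasF2 (hC2 : ContDiffOn ℝ 2 L {(0 : EuclideanSpace ℝ (Fin m))}ᶜ)
    {v : EuclideanSpace ℝ (Fin m)} (hv : v ≠ 0) :
    HasFDerivAt (fderiv ℝ L) (fderiv ℝ (fderiv ℝ L) v) v :=
  ((((hC2.contDiffAt (isOpen_compl_singleton.mem_nhds hv))).fderiv_right
    (m := 1) (le_refl 2)).differentiableAt one_ne_zero).hasFDerivAt

lemma fderiv_homog (hC2 : ContDiffOn ℝ 2 L {(0 : EuclideanSpace ℝ (Fin m))}ᶜ)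
    (hhom : ∀ s : ℝ, 0 < s → ∀ v, L (s • v) = s ^ 2 * L v)
    {s : ℝ} (hs : 0 < s) {v : EuclideanSpace ℝ (Fin m)} (hv : v ≠ 0) :
    fderiv ℝ L (s • v) = s • fderiv ℝ L v := by
  have hsv : s • v ≠ 0 := smul_ne_zero hs.ne' hv
  set g : EuclideanSpace ℝ (Fin m) →L[ℝ] EuclideanSpace ℝ (Fin m) :=
    s • ContinuousLinearMap.id ℝ _ with hg
  have hgv : HasFDerivAt (fun x => s • x) g v := by
    have := g.hasFDerivAt (x := v)
    convert this using 2 <;> simp [hg]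
  have h1 : HasFDerivAt (fun x => L (s • x)) ((fderiv ℝ L (s • v)).comp g) v := by
    have := (hasF hC2 hsv).comp v hgv
    exact this
  have h1' : HasFDerivAt (fun x => s ^ 2 * L x) ((fderiv ℝ L (s • v)).comp g) v := by
    apply h1.congr_of_eventuallyEq
    exact Filter.Eventually.of_forall fun x => (hhom s hs x).symm
  have h2 : HasFDerivAt (fun x => s ^ 2 * L x) ((s ^ 2) • fderiv ℝ L v) v :=
    (hasF hC2 hv).const_mul (s ^ 2)
  have h3 := h1'.unique h2
  ext w
  have h4 : (fderiv ℝ L (s • v)) (s • w) = s ^ 2 * (fderiv ℝ L v w) := by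
    have := DFunLike.congr_fun h3 w
    simpa [hg] using this
  have h5 : s * (fderiv ℝ L (s • v) w) = s ^ 2 * (fderiv ℝ L v w) := by
    rw [← h4, ContinuousLinearMap.map_smul, smul_eq_mul]
  have h6 : s * (fderiv ℝ L (s • v) w) = s * (s * fderiv ℝ L v w) := by
    rw [h5]; ring
  have h7 := mul_left_cancel₀ hs.ne' h6
  simpa [smul_eq_mul] using h7

lemma euler1 (hC2 : ContDiffOn ℝ 2 L {(0 : EuclideanSpace ℝ (Fin m))}ᶜ)
    (hhom : ∀ s : ℝ, 0 < s → ∀ v, L (s • v) = s ^ 2 * L v)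
    {v : EuclideanSpace ℝ (Fin m)} (hv : v ≠ 0) :
    fderiv ℝ L v v = 2 * L v := by
  have hc : HasDerivAt (fun t : ℝ => t • v) v 1 := by
    simpa using (hasDerivAt_id (1:ℝ)).smul_const v
  have h1 : HasDerivAt (fun t : ℝ => L (t • v)) (fderiv ℝ L v v) 1 :=
    (hasF hC2 hv).comp_hasDerivAt_of_eq 1 hc (one_smul ℝ v).symm
  have h3 : HasDerivAt (fun t : ℝ => t ^ 2 * L v) (2 * L v) 1 := by
    simpa using (hasDerivAt_pow 2 (1:ℝ)).mul_const (L v)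
  have h2 : (fun t : ℝ => L (t • v)) =ᶠ[nhds 1] fun t => t ^ 2 * L v := by
    filter_upwards [Ioi_mem_nhds (zero_lt_one)] with t ht using hhom t ht v
  exact ((h3.congr_of_eventuallyEq h2).unique h1).symm

lemma euler2 (hC2 : ContDiffOn ℝ 2 L {(0 : EuclideanSpace ℝ (Fin m))}ᶜ)
    (hhom : ∀ s : ℝ, 0 < s → ∀ v, L (s • v) = s ^ 2 * L v)
    {v : EuclideanSpace ℝ (Fin m)} (hv : v ≠ 0) :
    fderiv ℝ (fderiv ℝ L) v v = fderiv ℝ L v := by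
  have hc : HasDerivAt (fun t : ℝ => t • v) v 1 := by
    simpa using (hasDerivAt_id (1:ℝ)).smul_const v
  have h1 : HasDerivAt (fun t : ℝ => fderiv ℝ L (t • v)) (fderiv ℝ (fderiv ℝ L) v v) 1 :=
    (hasF2 hC2 hv).comp_hasDerivAt_of_eq 1 hc (one_smul ℝ v).symm
  have h3 : HasDerivAt (fun t : ℝ => t • fderiv ℝ L v) (fderiv ℝ L v) 1 := by
    simpa using (hasDerivAt_id (1:ℝ)).smul_const (fderiv ℝ L v)
  have h2 : (fun t : ℝ => fderiv ℝ L (t • v)) =ᶠ[nhds 1] fun t => t • fderiv ℝ L v := by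
    filter_upwards [Ioi_mem_nhds (zero_lt_one)] with t ht
    exact fderiv_homog hC2 hhom ht hv
  exact ((h3.congr_of_eventuallyEq h2).unique h1).symm

lemma hess_diag (hC2 : ContDiffOn ℝ 2 L {(0 : EuclideanSpace ℝ (Fin m))}ᶜ)
    (hhom : ∀ s : ℝ, 0 < s → ∀ v, L (s • v) = s ^ 2 * L v)
    {v : EuclideanSpace ℝ (Fin m)} (hv : v ≠ 0) :
    FinslerHess L v v v = 2 * L v := by
  rw [FinslerHess, euler2 hC2 hhom hv, euler1 hC2 hhom hv]

lemma L_cont (hC2 : ContDiffOn ℝ 2 L {(0 : EuclideanSpace ℝ (Fin m))}ᶜ)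
    (hhom : ∀ s : ℝ, 0 < s → ∀ v, L (s • v) = s ^ 2 * L v) : Continuous L := by
  rw [continuous_iff_continuousAt]
  intro v
  rcases eq_or_ne v 0 with rfl | hv
  · obtain ⟨C, hC⟩ : ∃ C : ℝ, ∀ x ∈ Metric.sphere (0 : EuclideanSpace ℝ (Fin m)) 1, ‖L x‖ ≤ C := by
      apply (isCompact_sphere _ _).exists_bound_of_continuousOn
      apply hC2.continuousOn.mono
      intro x hx
      simp only [mem_compl_iff, mem_singleton_iff]
      intro h0
      rw [h0] at hx
      simp at hx
    have hbound : ∀ w : EuclideanSpace ℝ (Fin m), ‖L w‖ ≤ (max C 0) * ‖w‖ ^ 2 := by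
      intro w
      rcases eq_or_ne w 0 with rfl | hw
      · simp [L_zero hhom]
      · have hr : (0:ℝ) < ‖w‖ := norm_pos_iff.mpr hw
        have hu : (‖w‖⁻¹ • w) ∈ Metric.sphere (0 : EuclideanSpace ℝ (Fin m)) 1 := by
          simp [norm_smul, abs_of_pos (inv_pos.mpr hr), inv_mul_cancel₀ hr.ne']
        have hLw : L w = ‖w‖ ^ 2 * L (‖w‖⁻¹ • w) := by
          rw [← hhom ‖w‖ hr (‖w‖⁻¹ • w), smul_inv_smul₀ hr.ne']
        rw [hLw, norm_mul]
        have h1 : ‖L (‖w‖⁻¹ • w)‖ ≤ max C 0 := le_trans (hC _ hu) (le_max_left _ _)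
        have h2 : ‖(‖w‖ ^ 2 : ℝ)‖ = ‖w‖ ^ 2 := by
          rw [Real.norm_eq_abs, abs_of_nonneg (sq_nonneg _)]
        rw [h2]
        nlinarith [norm_nonneg (L (‖w‖⁻¹ • w)), sq_nonneg ‖w‖, h1]
    unfold ContinuousAt
    rw [L_zero hhom]
    apply squeeze_zero_norm hbound
    have hcont : Continuous fun w : EuclideanSpace ℝ (Fin m) => (max C 0) * ‖w‖ ^ 2 := by
      continuity
    simpa using hcont.tendsto 0
  · exact hC2.continuousOn.continuousAt (isOpen_compl_singleton.mem_nhds hv)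

/-- Strict reverse Cauchy–Schwarz for the standard Lorentz form on `ℝ × ℝⁿ`. -/
lemma lorentz_cs_strict {k : ℕ} {a c : ℝ} {b d : EuclideanSpace ℝ (Fin k)}
    (hx : -(a * a) + ⟪b, b⟫ < 0) (hne : ∀ μ : ℝ, ¬(c = μ * a ∧ d = μ • b)) :
    (-(a * a) + ⟪b, b⟫) * (-(c * c) + ⟪d, d⟫) < (-(a * c) + ⟪b, d⟫) ^ 2 := by
  have hbb : (0:ℝ) ≤ ⟪b, b⟫ := real_inner_self_nonneg
  have ha : a ≠ 0 := by
    intro h; rw [h] at hx; nlinarith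
  have ha2 : 0 < a * a := mul_self_pos.mpr ha
  set r : ℝ := -(a * a) + ⟪b, b⟫ with hr
  have hrne : r ≠ 0 := ne_of_lt hx
  set μ : ℝ := (-(a * c) + ⟪b, d⟫) / r with hμ
  have hX : μ * r = -(a * c) + ⟪b, d⟫ := by
    rw [hμ, div_mul_cancel₀ _ hrne]
  set e : ℝ := c - μ * a with he
  set g : EuclideanSpace ℝ (Fin k) := d - μ • b with hg
  have hbg : ⟪b, g⟫ = ⟪b, d⟫ - μ * ⟪b, b⟫ := by
    rw [hg, inner_sub_right, real_inner_smul_right]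
  have hgg : ⟪g, g⟫ = ⟪d, d⟫ - 2 * μ * ⟪b, d⟫ + μ ^ 2 * ⟪b, b⟫ := by
    rw [hg]
    simp only [inner_sub_left, inner_sub_right, real_inner_smul_left, real_inner_smul_right,
      real_inner_comm d b]
    ring
  have hconstraint : -(a * e) + ⟪b, g⟫ = 0 := by
    rw [he, hbg]
    have : -(a * (c - μ * a)) + (⟪b, d⟫ - μ * ⟪b, b⟫) = (-(a*c) + ⟪b,d⟫) - μ * r := by
      rw [hr]; ring
    rw [this, ← hX]; ring
  have hae : a * e = ⟪b, g⟫ := by linarith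
  have hgne : g ≠ 0 := by
    intro h0
    apply hne μ
    have hbg0 : ⟪b, g⟫ = 0 := by rw [h0, inner_zero_right]
    have he0 : e = 0 := by
      have : a * e = 0 := by rw [hae, hbg0]
      exact (mul_eq_zero.mp this).resolve_left ha
    constructor
    · have : c - μ * a = 0 := he ▸ he0
      linarith
    · exact sub_eq_zero.mp (hg ▸ h0)
  have hggpos : 0 < ⟪g, g⟫ := by
    rw [real_inner_self_eq_norm_sq]
    exact pow_pos (norm_pos_iff.mpr hgne) 2
  have hcs : ⟪b, g⟫ * ⟪b, g⟫ ≤ ⟪b, b⟫ * ⟪g, g⟫ := real_inner_mul_inner_self_le b g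
  have hz : 0 < -(e * e) + ⟪g, g⟫ := by
    have h1 : (a * e) * (a * e) ≤ ⟪b, b⟫ * ⟪g, g⟫ := by rw [hae]; exact hcs
    have h2 : ⟪b, b⟫ * ⟪g, g⟫ < (a * a) * ⟪g, g⟫ := by
      apply mul_lt_mul_of_pos_right _ hggpos
      linarith
    nlinarith [h1, h2, ha2]
  have hY : -(c * c) + ⟪d, d⟫ = (-(e * e) + ⟪g, g⟫) + μ ^ 2 * r := by
    have hc' : c = e + μ * a := by rw [he]; ring
    have hbd : ⟪b, d⟫ = ⟪b, g⟫ + μ * ⟪b, b⟫ := by linarith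
    have hdd : ⟪d, d⟫ = ⟪g, g⟫ + 2 * μ * ⟪b, d⟫ - μ ^ 2 * ⟪b, b⟫ := by linarith [hgg]
    rw [hc', hdd, hbd, hr]
    linear_combination (-2*μ) * hae
  rw [← hX, hY]
  nlinarith [mul_neg_of_neg_of_pos hx hz, sq_nonneg (μ * r)]

end Basic

section Lor

variable {n : ℕ} {L : EuclideanSpace ℝ (Fin (n + 1)) → ℝ}

lemma hess_cs_strict
    (hLor : ∀ v : EuclideanSpace ℝ (Fin (n + 1)), v ≠ 0 →
      ∃ φ : EuclideanSpace ℝ (Fin (n + 1)) ≃ₗ[ℝ] ℝ × EuclideanSpace ℝ (Fin n),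
        ∀ w u, FinslerHess L v w u
          = -((φ w).1 * (φ u).1) + (inner ℝ (φ w).2 (φ u).2 : ℝ))
    {v u : EuclideanSpace ℝ (Fin (n + 1))} (hv : v ≠ 0)
    (hvv : FinslerHess L v v v < 0) (hu : ∀ μ : ℝ, u ≠ μ • v) :
    FinslerHess L v v v * FinslerHess L v u u < (FinslerHess L v v u) ^ 2 := by
  obtain ⟨φ, hφ⟩ := hLor v hv
  rw [hφ v v] at hvv ⊢
  rw [hφ v u, hφ u u]
  exact lorentz_cs_strict hvv (by
    intro μ ⟨h1, h2⟩
    apply hu μ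
    apply φ.injective
    rw [map_smul]
    exact Prod.ext (by simpa using h1) (by simpa using h2))

lemma hess_radial
    (hLor : ∀ v : EuclideanSpace ℝ (Fin (n + 1)), v ≠ 0 →
      ∃ φ : EuclideanSpace ℝ (Fin (n + 1)) ≃ₗ[ℝ] ℝ × EuclideanSpace ℝ (Fin n),
        ∀ w u, FinslerHess L v w u
          = -((φ w).1 * (φ u).1) + (inner ℝ (φ w).2 (φ u).2 : ℝ))
    {v : EuclideanSpace ℝ (Fin (n + 1))} (hv : v ≠ 0) (μ : ℝ) :
    FinslerHess L v v (μ • v) = μ * FinslerHess L v v v ∧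
      FinslerHess L v (μ • v) (μ • v) = μ ^ 2 * FinslerHess L v v v := by
  obtain ⟨φ, hφ⟩ := hLor v hv
  rw [hφ v v, hφ v (μ • v), hφ (μ • v) (μ • v)]
  constructor
  · rw [map_smul, Prod.smul_fst, Prod.smul_snd, real_inner_smul_right, smul_eq_mul]
    ring
  · rw [map_smul, Prod.smul_fst, Prod.smul_snd, real_inner_smul_right, real_inner_smul_left,
      smul_eq_mul]
    ring

lemma hess_cs
    (hLor : ∀ v : EuclideanSpace ℝ (Fin (n + 1)), v ≠ 0 →
      ∃ φ : EuclideanSpace ℝ (Fin (n + 1)) ≃ₗ[ℝ] ℝ × EuclideanSpace ℝ (Fin n),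
        ∀ w u, FinslerHess L v w u
          = -((φ w).1 * (φ u).1) + (inner ℝ (φ w).2 (φ u).2 : ℝ))
    {v : EuclideanSpace ℝ (Fin (n + 1))} (u : EuclideanSpace ℝ (Fin (n + 1))) (hv : v ≠ 0)
    (hvv : FinslerHess L v v v < 0) :
    FinslerHess L v v v * FinslerHess L v u u ≤ (FinslerHess L v v u) ^ 2 := by
  by_cases hrad : ∃ μ : ℝ, u = μ • v
  · obtain ⟨μ, rfl⟩ := hrad
    obtain ⟨h1, h2⟩ := hess_radial hLor hv μ
    rw [h1, h2]; ring_nf; exact le_refl _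
  · push_neg at hrad
    exact (hess_cs_strict hLor hv hvv hrad).le

end Lor

section Seg

variable {m : ℕ} {L : EuclideanSpace ℝ (Fin m) → ℝ}
variable (hC2 : ContDiffOn ℝ 2 L {(0 : EuclideanSpace ℝ (Fin m))}ᶜ)
    (hhom : ∀ s : ℝ, 0 < s → ∀ v, L (s • v) = s ^ 2 * L v)
    (v₁ u : EuclideanSpace ℝ (Fin m))

lemma hasDerivAt_line (x : ℝ) : HasDerivAt (fun t : ℝ => v₁ + t • u) u x := by
  simpa using ((hasDerivAt_id x).smul_const u).const_add v₁

lemma seg_ne_zero (hL0 : L 0 = 0) {x : ℝ} (hx : L (v₁ + x • u) < 0) : v₁ + x • u ≠ 0 := by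
  intro h; rw [h, hL0] at hx; exact lt_irrefl 0 hx

include hC2 in
lemma seg_hasDerivAt_h (hL0 : L 0 = 0) {x : ℝ} (hx : L (v₁ + x • u) < 0) :
    HasDerivAt (fun t : ℝ => -(2 * L (v₁ + t • u)))
      (-(2 * fderiv ℝ L (v₁ + x • u) u)) x := by
  have h1 : HasDerivAt (fun t : ℝ => L (v₁ + t • u)) (fderiv ℝ L (v₁ + x • u) u) x :=
    (hasF hC2 (seg_ne_zero v₁ u hL0 hx)).comp_hasDerivAt x (hasDerivAt_line v₁ u x)
  exact (h1.const_mul 2).neg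

include hC2 in
lemma seg_hasDerivAt_f (hL0 : L 0 = 0) {x : ℝ} (hx : L (v₁ + x • u) < 0) :
    HasDerivAt (fun t : ℝ => Real.sqrt (-(2 * L (v₁ + t • u))))
      (-(2 * fderiv ℝ L (v₁ + x • u) u) / (2 * Real.sqrt (-(2 * L (v₁ + x • u))))) x := by
  have hpos : 0 < -(2 * L (v₁ + x • u)) := by linarith
  exact (seg_hasDerivAt_h hC2 v₁ u hL0 hx).sqrt hpos.ne'

include hC2 hhom in
lemma seg_hasDerivAt_F (hL0 : L 0 = 0) {x : ℝ} (hx : L (v₁ + x • u) < 0) :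
    HasDerivAt (fun t : ℝ =>
        -(2 * fderiv ℝ L (v₁ + t • u) u) / (2 * Real.sqrt (-(2 * L (v₁ + t • u)))))
      ((FinslerHess L (v₁ + x • u) (v₁ + x • u) (v₁ + x • u) * FinslerHess L (v₁ + x • u) u u
          - (FinslerHess L (v₁ + x • u) (v₁ + x • u) u) ^ 2)
        / (Real.sqrt (-(2 * L (v₁ + x • u)))) ^ 3) x := by
  set σ := v₁ + x • u with hσ
  have hσ0 : σ ≠ 0 := seg_ne_zero v₁ u hL0 hx
  have hpos : 0 < -(2 * L σ) := by rw [hσ]; linarith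
  set s := Real.sqrt (-(2 * L σ)) with hs
  have hspos : 0 < s := Real.sqrt_pos.mpr hpos
  have hs2 : s ^ 2 = -(2 * L σ) := Real.sq_sqrt hpos.le
  have hD : HasDerivAt (fun t : ℝ => fderiv ℝ L (v₁ + t • u))
      (fderiv ℝ (fderiv ℝ L) σ u) x :=
    (hasF2 hC2 hσ0).comp_hasDerivAt x (hasDerivAt_line v₁ u x)
  have hN0 : HasDerivAt (fun t : ℝ => fderiv ℝ L (v₁ + t • u) u)
      (FinslerHess L σ u u) x := by
    have := hD.clm_apply (hasDerivAt_const x u)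
    simpa [FinslerHess] using this
  have hN : HasDerivAt (fun t : ℝ => -(2 * fderiv ℝ L (v₁ + t • u) u))
      (-(2 * FinslerHess L σ u u)) x := (hN0.const_mul 2).neg
  have hDen : HasDerivAt (fun t : ℝ => 2 * Real.sqrt (-(2 * L (v₁ + t • u))))
      (2 * (-(2 * fderiv ℝ L σ u) / (2 * s))) x :=
    (seg_hasDerivAt_f hC2 v₁ u hL0 hx).const_mul 2
  have hDenne : 2 * s ≠ 0 := by positivity
  have hdiv := hN.div hDen (by rw [← hσ, ← hs]; exact hDenne)
  rw [← hσ, ← hs] at hdiv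
  refine HasDerivAt.congr_deriv hdiv ?_
  have hp : fderiv ℝ L σ u = FinslerHess L σ σ u := by
    rw [FinslerHess, euler2 hC2 hhom hσ0]
  have hr : FinslerHess L σ σ σ = 2 * L σ := by
    rw [FinslerHess, euler2 hC2 hhom hσ0, euler1 hC2 hhom hσ0]
  rw [hr, ← hp]
  have h2L : 2 * L σ = -(s ^ 2) := by rw [hs2]; ring
  rw [h2L]
  field_simp

end Seg

section Seg2

variable {n : ℕ} {L : EuclideanSpace ℝ (Fin (n + 1)) → ℝ}
variable (hC2 : ContDiffOn ℝ 2 L {(0 : EuclideanSpace ℝ (Fin (n+1)))}ᶜ)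
    (hhom : ∀ s : ℝ, 0 < s → ∀ v, L (s • v) = s ^ 2 * L v)
    (hcont : Continuous L) (hL0 : L 0 = 0)
    (v₁ u : EuclideanSpace ℝ (Fin (n+1)))

include hC2 hhom hcont hL0 in
lemma seg_deriv2 {x : ℝ} (hx : L (v₁ + x • u) < 0) :
    deriv^[2] (fun t : ℝ => Real.sqrt (-(2 * L (v₁ + t • u)))) x
      = (FinslerHess L (v₁ + x • u) (v₁ + x • u) (v₁ + x • u) * FinslerHess L (v₁ + x • u) u u
          - (FinslerHess L (v₁ + x • u) (v₁ + x • u) u) ^ 2)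
        / (Real.sqrt (-(2 * L (v₁ + x • u)))) ^ 3 := by
  have hline : Continuous fun t : ℝ => v₁ + t • u := by continuity
  have hS : IsOpen {t : ℝ | L (v₁ + t • u) < 0} :=
    isOpen_lt (hcont.comp hline) continuous_const
  have hev : deriv (fun t : ℝ => Real.sqrt (-(2 * L (v₁ + t • u))))
      =ᶠ[nhds x] fun t : ℝ =>
        -(2 * fderiv ℝ L (v₁ + t • u) u) / (2 * Real.sqrt (-(2 * L (v₁ + t • u)))) := by
    filter_upwards [hS.mem_nhds hx] with t ht
    exact (seg_hasDerivAt_f hC2 v₁ u hL0 ht).deriv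
  show deriv (deriv (fun t : ℝ => Real.sqrt (-(2 * L (v₁ + t • u))))) x = _
  rw [hev.deriv_eq]
  exact (seg_hasDerivAt_F hC2 hhom v₁ u hL0 hx).deriv

include hcont in
lemma seg_continuous :
    Continuous fun t : ℝ => Real.sqrt (-(2 * L (v₁ + t • u))) := by
  have hline : Continuous fun t : ℝ => v₁ + t • u := by continuity
  have h1 : Continuous fun t : ℝ => -(2 * L (v₁ + t • u)) :=
    (continuous_const.mul (hcont.comp hline)).neg
  exact Real.continuous_sqrt.comp h1

include hC2 hhom hcont hL0 in
lemma seg_concaveOn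
    (hLor : ∀ v : EuclideanSpace ℝ (Fin (n + 1)), v ≠ 0 →
      ∃ φ : EuclideanSpace ℝ (Fin (n + 1)) ≃ₗ[ℝ] ℝ × EuclideanSpace ℝ (Fin n),
        ∀ w u, FinslerHess L v w u
          = -((φ w).1 * (φ u).1) + (inner ℝ (φ w).2 (φ u).2 : ℝ))
    (hseg : ∀ t ∈ Icc (0:ℝ) 1, L (v₁ + t • u) < 0) :
    ConcaveOn ℝ (Icc (0:ℝ) 1) (fun t : ℝ => Real.sqrt (-(2 * L (v₁ + t • u)))) := by
  apply concaveOn_of_hasDerivWithinAt2_nonpos (convex_Icc 0 1)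
    (f' := fun t : ℝ =>
        -(2 * fderiv ℝ L (v₁ + t • u) u) / (2 * Real.sqrt (-(2 * L (v₁ + t • u)))))
    (f'' := fun t : ℝ =>
        (FinslerHess L (v₁ + t • u) (v₁ + t • u) (v₁ + t • u) * FinslerHess L (v₁ + t • u) u u
          - (FinslerHess L (v₁ + t • u) (v₁ + t • u) u) ^ 2)
        / (Real.sqrt (-(2 * L (v₁ + t • u)))) ^ 3)
    ((seg_continuous hcont v₁ u).continuousOn)
  · intro x hx
    rw [interior_Icc] at hx
    exact (seg_hasDerivAt_f hC2 v₁ u hL0 (hseg x (Ioo_subset_Icc_self hx))).hasDerivWithinAt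
  · intro x hx
    rw [interior_Icc] at hx
    exact (seg_hasDerivAt_F hC2 hhom v₁ u hL0 (hseg x (Ioo_subset_Icc_self hx))).hasDerivWithinAt
  · intro x hx
    rw [interior_Icc] at hx
    have hxL := hseg x (Ioo_subset_Icc_self hx)
    have hσ0 := seg_ne_zero v₁ u hL0 hxL
    have hvv : FinslerHess L (v₁ + x • u) (v₁ + x • u) (v₁ + x • u) < 0 := by
      rw [hess_diag hC2 hhom hσ0]; linarith
    apply div_nonpos_of_nonpos_of_nonneg
    · have := hess_cs hLor u hσ0 hvv
      linarith
    · positivity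

include hC2 hhom hcont hL0 in
lemma seg_strictConcaveOn
    (hLor : ∀ v : EuclideanSpace ℝ (Fin (n + 1)), v ≠ 0 →
      ∃ φ : EuclideanSpace ℝ (Fin (n + 1)) ≃ₗ[ℝ] ℝ × EuclideanSpace ℝ (Fin n),
        ∀ w u, FinslerHess L v w u
          = -((φ w).1 * (φ u).1) + (inner ℝ (φ w).2 (φ u).2 : ℝ))
    (hseg : ∀ t ∈ Icc (0:ℝ) 1, L (v₁ + t • u) < 0)
    (hind : ∀ x ∈ Ioo (0:ℝ) 1, ∀ μ : ℝ, u ≠ μ • (v₁ + x • u)) :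
    StrictConcaveOn ℝ (Icc (0:ℝ) 1) (fun t : ℝ => Real.sqrt (-(2 * L (v₁ + t • u)))) := by
  apply strictConcaveOn_of_deriv2_neg (convex_Icc 0 1)
    ((seg_continuous hcont v₁ u).continuousOn)
  intro x hx
  rw [interior_Icc] at hx
  have hxL := hseg x (Ioo_subset_Icc_self hx)
  rw [seg_deriv2 hC2 hhom hcont hL0 v₁ u hxL]
  have hσ0 := seg_ne_zero v₁ u hL0 hxL
  have hvv : FinslerHess L (v₁ + x • u) (v₁ + x • u) (v₁ + x • u) < 0 := by
    rw [hess_diag hC2 hhom hσ0]; linarith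
  apply div_neg_of_neg_of_pos
  · have := hess_cs_strict hLor hσ0 hvv (hind x hx)
    linarith
  · have hpos : 0 < -(2 * L (v₁ + x • u)) := by linarith
    positivity

end Seg2

end JcAux

open JcAux in
set_option maxHeartbeats 1000000 in
/-- For `c > 0`, each connected component of `J(c)` is strictly convex. -/
theorem Jc_component_strictly_convex (n : ℕ) (L : EuclideanSpace ℝ (Fin (n + 1)) → ℝ)
    (hC2 : ContDiffOn ℝ 2 L {(0 : EuclideanSpace ℝ (Fin (n + 1)))}ᶜ)
    (hhom : ∀ s : ℝ, 0 < s → ∀ v, L (s • v) = s ^ 2 * L v)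
    (hLor : ∀ v : EuclideanSpace ℝ (Fin (n + 1)), v ≠ 0 →
      ∃ φ : EuclideanSpace ℝ (Fin (n + 1)) ≃ₗ[ℝ] ℝ × EuclideanSpace ℝ (Fin n),
        ∀ w u, FinslerHess L v w u
          = -((φ w).1 * (φ u).1) + (inner ℝ (φ w).2 (φ u).2 : ℝ))
    (c : ℝ) (hc : 0 < c)
    (v₁ v₂ : EuclideanSpace ℝ (Fin (n + 1)))
    (hv₁ : v₁ ∈ {v : EuclideanSpace ℝ (Fin (n + 1)) | v ≠ 0 ∧ FinslerHess L v v v ≤ -c ^ 2})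
    (hv₂ : v₂ ∈ connectedComponentIn {v : EuclideanSpace ℝ (Fin (n + 1)) | v ≠ 0 ∧ FinslerHess L v v v ≤ -c ^ 2} v₁)
    (hne : v₁ ≠ v₂) (a : ℝ) (ha : a ∈ Set.Ioo (0 : ℝ) 1) :
    2 * L ((1 - a) • v₁ + a • v₂) < -c ^ 2 ∧
      (1 - a) • v₁ + a • v₂ ∈
        interior (connectedComponentIn
          {v : EuclideanSpace ℝ (Fin (n + 1)) | v ≠ 0 ∧ FinslerHess L v v v ≤ -c ^ 2} v₁) := by
  have hL0 : L 0 = 0 := L_zero hhom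
  have hcont : Continuous L := L_cont hC2 hhom
  set J := {v : EuclideanSpace ℝ (Fin (n + 1)) | v ≠ 0 ∧ FinslerHess L v v v ≤ -c ^ 2} with hJ
  have hv₁0 : v₁ ≠ 0 := hv₁.1
  have h2Lv₁ : 2 * L v₁ ≤ -c ^ 2 := by
    have := hv₁.2; rwa [hess_diag hC2 hhom hv₁0] at this
  have hLv₁ : L v₁ < 0 := by nlinarith
  have hv₂J : v₂ ∈ J := connectedComponentIn_subset _ _ hv₂
  have hv₂0 : v₂ ≠ 0 := hv₂J.1
  have h2Lv₂ : 2 * L v₂ ≤ -c ^ 2 := by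
    have := hv₂J.2; rwa [hess_diag hC2 hhom hv₂0] at this
  have hLv₂ : L v₂ < 0 := by nlinarith
  set T := {v : EuclideanSpace ℝ (Fin (n + 1)) | L v < 0} with hT
  have hTopen : IsOpen T := isOpen_lt hcont continuous_const
  have hJT : J ⊆ T := by
    intro v hvJ
    have h2 : 2 * L v ≤ -c ^ 2 := by
      have := hvJ.2; rwa [hess_diag hC2 hhom hvJ.1] at this
    show L v < 0
    nlinarith
  set C' := connectedComponentIn T v₁ with hC'
  have hv₁C' : v₁ ∈ C' := mem_connectedComponentIn hLv₁
  have hv₂C' : v₂ ∈ C' := connectedComponentIn_mono v₁ hJT hv₂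
  -- the set of points reachable from v₁ by a timelike segment
  set D := {w : EuclideanSpace ℝ (Fin (n + 1)) |
      w ∈ C' ∧ ∀ t ∈ Icc (0:ℝ) 1, L (v₁ + t • (w - v₁)) < 0} with hD
  have hOopen : IsOpen {w : EuclideanSpace ℝ (Fin (n + 1)) |
      ∀ t ∈ Icc (0:ℝ) 1, L (v₁ + t • (w - v₁)) < 0} := by
    rw [Metric.isOpen_iff]
    intro w hw
    have hK : IsCompact ((fun t : ℝ => v₁ + t • (w - v₁)) '' Icc 0 1) :=
      isCompact_Icc.image (continuous_const.add (continuous_id.smul continuous_const))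
    have hKT : ((fun t : ℝ => v₁ + t • (w - v₁)) '' Icc 0 1) ⊆ T := by
      rintro _ ⟨t, ht, rfl⟩
      exact hw t ht
    obtain ⟨δ, hδ, hsub⟩ := hK.exists_thickening_subset_open hTopen hKT
    refine ⟨δ, hδ, fun w' hw' t ht => ?_⟩
    have hmem : v₁ + t • (w' - v₁) ∈
        Metric.thickening δ ((fun t : ℝ => v₁ + t • (w - v₁)) '' Icc 0 1) := by
      rw [Metric.mem_thickening_iff]
      refine ⟨v₁ + t • (w - v₁), ⟨t, ht, rfl⟩, ?_⟩
      have hdist : dist (v₁ + t • (w' - v₁)) (v₁ + t • (w - v₁)) = ‖t • (w' - w)‖ := by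
        rw [dist_eq_norm]
        congr 1
        rw [smul_sub, smul_sub, smul_sub]
        abel
      rw [hdist, norm_smul]
      have hb : ‖w' - w‖ < δ := by
        rw [← dist_eq_norm]
        exact Metric.mem_ball.mp hw'
      have ht1 : |t| ≤ 1 := by
        rw [abs_le]; exact ⟨by linarith [ht.1], ht.2⟩
      calc |t| * ‖w' - w‖ ≤ 1 * ‖w' - w‖ :=
            mul_le_mul_of_nonneg_right ht1 (norm_nonneg _)
        _ = ‖w' - w‖ := one_mul _
        _ < δ := hb
    exact hsub hmem
  have hDopen : IsOpen D := (hTopen.connectedComponentIn).inter hOopen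
  have hv₁D : v₁ ∈ D := ⟨hv₁C', fun t _ => by simpa using hLv₁⟩
  have hclosed : closure D ∩ C' ⊆ D := by
    rintro w ⟨hwc, hwC'⟩
    obtain ⟨ws, hws, hlim⟩ := mem_closure_iff_seq_limit.mp hwc
    have hLw : L w < 0 := connectedComponentIn_subset T v₁ hwC'
    refine ⟨hwC', fun t ht => ?_⟩
    have hkey : ∀ k : ℕ,
        (1 - t) * Real.sqrt (-(2 * L v₁)) + t * Real.sqrt (-(2 * L (ws k)))
          ≤ Real.sqrt (-(2 * L (v₁ + t • (ws k - v₁)))) := by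
      intro k
      have hconc := seg_concaveOn hC2 hhom hcont hL0 v₁ (ws k - v₁) hLor (hws k).2
      have h2 := hconc.2 (left_mem_Icc.mpr zero_le_one) (right_mem_Icc.mpr zero_le_one)
        (show (0:ℝ) ≤ 1 - t by linarith [ht.2]) ht.1 (by ring)
      simp only [smul_eq_mul, mul_zero, mul_one, zero_add] at h2
      rw [show v₁ + (0:ℝ) • (ws k - v₁) = v₁ by rw [zero_smul, add_zero],
        show v₁ + (1:ℝ) • (ws k - v₁) = ws k by rw [one_smul]; abel] at h2
      exact h2
    have hg : Continuous fun w' : EuclideanSpace ℝ (Fin (n + 1)) =>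
        Real.sqrt (-(2 * L (v₁ + t • (w' - v₁)))) := by
      apply Real.continuous_sqrt.comp
      apply Continuous.neg
      apply continuous_const.mul
      exact hcont.comp (by fun_prop)
    have hlhs : Filter.Tendsto (fun k => Real.sqrt (-(2 * L (v₁ + t • (ws k - v₁)))))
        Filter.atTop (nhds (Real.sqrt (-(2 * L (v₁ + t • (w - v₁)))))) :=
      (hg.tendsto w).comp hlim
    have hg2 : Continuous fun w' : EuclideanSpace ℝ (Fin (n + 1)) =>
        (1 - t) * Real.sqrt (-(2 * L v₁)) + t * Real.sqrt (-(2 * L w')) := by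
      apply continuous_const.add
      apply continuous_const.mul
      exact Real.continuous_sqrt.comp (continuous_const.mul hcont).neg
    have hrhs : Filter.Tendsto
        (fun k => (1 - t) * Real.sqrt (-(2 * L v₁)) + t * Real.sqrt (-(2 * L (ws k))))
        Filter.atTop
        (nhds ((1 - t) * Real.sqrt (-(2 * L v₁)) + t * Real.sqrt (-(2 * L w)))) :=
      (hg2.tendsto w).comp hlim
    have hineq := le_of_tendsto_of_tendsto' hrhs hlhs hkey
    have hs0 : 0 < Real.sqrt (-(2 * L v₁)) := Real.sqrt_pos.mpr (by linarith)
    have hs1 : 0 < Real.sqrt (-(2 * L w)) := Real.sqrt_pos.mpr (by linarith)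
    have hposc : 0 < (1 - t) * Real.sqrt (-(2 * L v₁)) + t * Real.sqrt (-(2 * L w)) := by
      rcases eq_or_lt_of_le ht.1 with h0 | h0
      · rw [← h0]; simpa using hs0
      · nlinarith [ht.2, hs0, hs1]
    have := Real.sqrt_pos.mp (lt_of_lt_of_le hposc hineq)
    linarith
  have hCD : C' ⊆ D :=
    isPreconnected_connectedComponentIn.subset_of_closure_inter_subset hDopen
      ⟨v₁, hv₁C', hv₁D⟩ hclosed
  have hv₂D := hCD hv₂C'
  set u := v₂ - v₁ with hu
  have hseg : ∀ t ∈ Icc (0:ℝ) 1, L (v₁ + t • u) < 0 := hv₂D.2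
  have hpt : (1 - a) • v₁ + a • v₂ = v₁ + a • u := by
    rw [hu, smul_sub, sub_smul, one_smul]
    abel
  rw [hpt]
  have hmain : (∀ t ∈ Icc (0:ℝ) a, 2 * L (v₁ + t • u) ≤ -c ^ 2) ∧
      2 * L (v₁ + a • u) < -c ^ 2 := by
    by_cases hrad : ∃ μ : ℝ, v₂ = μ • v₁
    · obtain ⟨μ, hμ⟩ := hrad
      have hμpos : 0 < μ := by
        by_contra hle
        push_neg at hle
        have h1μ : (0:ℝ) < 1 - μ := by linarith
        have htt : 1 / (1 - μ) ∈ Icc (0:ℝ) 1 :=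
          ⟨by positivity, by rw [div_le_one h1μ]; linarith⟩
        have hbad := hseg (1 / (1 - μ)) htt
        have hzero : v₁ + (1 / (1 - μ)) • u = 0 := by
          rw [hu, hμ, show μ • v₁ - v₁ = (μ - 1) • v₁ by rw [sub_smul, one_smul], smul_smul,
            show 1 / (1 - μ) * (μ - 1) = -1 by field_simp; ring, neg_one_smul]
          abel
        rw [hzero, hL0] at hbad
        exact lt_irrefl 0 hbad
      have hμ1 : μ ≠ 1 := by
        intro h
        rw [h, one_smul] at hμ
        exact hne hμ.symm
      have hP : (0:ℝ) < -(2 * L v₁) := by nlinarith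
      have hμ2 : μ ^ 2 * (2 * L v₁) ≤ -c ^ 2 := by
        have h := h2Lv₂
        rw [hμ, hhom μ hμpos v₁] at h
        linarith
      have hptco : ∀ t : ℝ, v₁ + t • u = (1 - t + t * μ) • v₁ := by
        intro t
        rw [hu, hμ, smul_sub, smul_smul, add_smul, sub_smul, one_smul]
        abel
      constructor
      · intro t ht
        have hta : t < 1 := lt_of_le_of_lt ht.2 ha.2
        rw [hptco t]
        have hs : 0 < 1 - t + t * μ := by nlinarith [ht.1]
        rw [hhom _ hs]
        rcases lt_or_gt_of_ne hμ1 with h | h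
        · have h1 : μ ≤ 1 - t + t * μ := by nlinarith [ht.1, hta]
          have hs2 : μ ^ 2 ≤ (1 - t + t * μ) ^ 2 := by nlinarith [h1, hμpos]
          nlinarith [hs2, hμ2, hP]
        · have h1 : (1:ℝ) ≤ 1 - t + t * μ := by nlinarith [ht.1]
          have hs2 : (1:ℝ) ≤ (1 - t + t * μ) ^ 2 := by nlinarith [h1]
          nlinarith [hs2, h2Lv₁, hP]
      · rw [hptco a]
        have hs : 0 < 1 - a + a * μ := by nlinarith [ha.1, ha.2]
        rw [hhom _ hs]
        rcases lt_or_gt_of_ne hμ1 with h | h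
        · have h1 : μ < 1 - a + a * μ := by nlinarith [ha.1, ha.2]
          have hs2 : μ ^ 2 < (1 - a + a * μ) ^ 2 := by nlinarith [h1, hμpos]
          nlinarith [hs2, hμ2, hP]
        · have h1 : (1:ℝ) < 1 - a + a * μ := by nlinarith [ha.1]
          have hs2 : (1:ℝ) < (1 - a + a * μ) ^ 2 := by nlinarith [h1]
          nlinarith [hs2, h2Lv₁, hP]
    · push_neg at hrad
      have hind : ∀ x ∈ Ioo (0:ℝ) 1, ∀ ν : ℝ, u ≠ ν • (v₁ + x • u) := by
        intro x _ ν hνeq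
        have h1 : (1 - ν * x) • u = ν • v₁ := by
          rw [sub_smul, one_smul]
          nth_rewrite 1 [hνeq]
          rw [smul_add, smul_smul]
          abel
        rcases eq_or_ne (1 - ν * x) 0 with h0 | h0
        · rw [h0, zero_smul] at h1
          have hν0 : ν ≠ 0 := by
            intro h
            rw [h] at h0
            norm_num at h0
          exact hv₁0 ((smul_eq_zero.mp h1.symm).resolve_left hν0)
        · apply hrad (1 + (1 - ν * x)⁻¹ * ν)
          have huv : u = ((1 - ν * x)⁻¹ * ν) • v₁ := by
            rw [← inv_smul_smul₀ h0 u, h1, smul_smul]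
          rw [show v₂ = v₁ + u by rw [hu]; abel, huv, add_smul, one_smul]
      have hstrict := seg_strictConcaveOn hC2 hhom hcont hL0 v₁ u hLor hseg hind
      have hconc := hstrict.concaveOn
      have harg : ∀ t ∈ Icc (0:ℝ) 1, (0:ℝ) ≤ -(2 * L (v₁ + t • u)) := by
        intro t ht
        have := hseg t ht
        linarith
      have hf0 : c ≤ Real.sqrt (-(2 * L v₁)) := by
        rw [Real.le_sqrt hc.le (by linarith)]
        linarith
      have hf1 : c ≤ Real.sqrt (-(2 * L v₂)) := by
        rw [Real.le_sqrt hc.le (by linarith)]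
        linarith
      have hptv₂ : v₁ + (1:ℝ) • u = v₂ := by rw [one_smul, hu]; abel
      have hpt0 : v₁ + (0:ℝ) • u = v₁ := by simp
      constructor
      · intro t ht
        have ht1 : t ∈ Icc (0:ℝ) 1 := ⟨ht.1, le_trans ht.2 ha.2.le⟩
        have h2 := hconc.2 (left_mem_Icc.mpr zero_le_one) (right_mem_Icc.mpr zero_le_one)
          (show (0:ℝ) ≤ 1 - t by linarith [ht1.2]) ht1.1 (by ring)
        simp only [smul_eq_mul, mul_zero, mul_one, zero_add] at h2
        rw [hpt0, hptv₂] at h2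
        have hft : c ≤ Real.sqrt (-(2 * L (v₁ + t • u))) := by
          nlinarith [hf0, hf1, ht1.1, ht1.2, h2,
            Real.sqrt_nonneg (-(2 * L v₁)), Real.sqrt_nonneg (-(2 * L v₂))]
        have := (Real.le_sqrt hc.le (harg t ht1)).mp hft
        linarith
      · have h2 := hstrict.2 (left_mem_Icc.mpr zero_le_one) (right_mem_Icc.mpr zero_le_one)
          (by norm_num : (0:ℝ) ≠ 1) (show (0:ℝ) < 1 - a by linarith [ha.2]) ha.1 (by ring)
        simp only [smul_eq_mul, mul_zero, mul_one, zero_add] at h2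
        rw [hpt0, hptv₂] at h2
        have hfa : c < Real.sqrt (-(2 * L (v₁ + a • u))) := by
          nlinarith [hf0, hf1, ha.1, ha.2, h2,
            Real.sqrt_nonneg (-(2 * L v₁)), Real.sqrt_nonneg (-(2 * L v₂))]
        have := (Real.lt_sqrt hc.le).mp hfa
        linarith
  obtain ⟨hsegJ, hstrict2⟩ := hmain
  refine ⟨hstrict2, ?_⟩
  have hσaL : L (v₁ + a • u) < 0 := by nlinarith
  have hσa0 : v₁ + a • u ≠ 0 := seg_ne_zero v₁ u hL0 hσaL
  have hKconn : IsPreconnected ((fun t : ℝ => v₁ + t • u) '' Icc 0 a) :=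
    isPreconnected_Icc.image _ (Continuous.continuousOn
      (continuous_const.add (continuous_id.smul continuous_const)))
  have hKJ : ((fun t : ℝ => v₁ + t • u) '' Icc 0 a) ⊆ J := by
    rintro _ ⟨t, ht, rfl⟩
    have h2 := hsegJ t ht
    have hLt : L (v₁ + t • u) < 0 := by nlinarith
    have hne0 : v₁ + t • u ≠ 0 := seg_ne_zero v₁ u hL0 hLt
    exact ⟨hne0, by rw [hess_diag hC2 hhom hne0]; linarith⟩
  have hv₁K : v₁ ∈ (fun t : ℝ => v₁ + t • u) '' Icc 0 a :=
    ⟨0, ⟨le_refl 0, ha.1.le⟩, by simp⟩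
  have hKsub := hKconn.subset_connectedComponentIn hv₁K hKJ
  have hσaJ : v₁ + a • u ∈ connectedComponentIn J v₁ :=
    hKsub ⟨a, ⟨ha.1.le, le_refl a⟩, rfl⟩
  set U := {v : EuclideanSpace ℝ (Fin (n + 1)) | 2 * L v < -c ^ 2} with hU
  have hUopen : IsOpen U := isOpen_lt (continuous_const.mul hcont) continuous_const
  have hUJ : U ⊆ J := by
    intro v hv
    have h2 : 2 * L v < -c ^ 2 := hv
    have hLv : L v < 0 := by nlinarith
    have hv0 : v ≠ 0 := by
      intro h
      rw [h, hL0] at hLv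
      exact lt_irrefl 0 hLv
    exact ⟨hv0, by rw [hess_diag hC2 hhom hv0]; linarith⟩
  have hσaU : v₁ + a • u ∈ U := hstrict2
  have hWopen : IsOpen (connectedComponentIn U (v₁ + a • u)) := hUopen.connectedComponentIn
  have hWsub : connectedComponentIn U (v₁ + a • u) ⊆ connectedComponentIn J v₁ := by
    rw [connectedComponentIn_eq hσaJ]
    exact isPreconnected_connectedComponentIn.subset_connectedComponentIn
      (mem_connectedComponentIn hσaU) ((connectedComponentIn_subset U _).trans hUJ)
  exact mem_interior.mpr ⟨connectedComponentIn U (v₁ + a • u), hWsub, hWopen,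
    mem_connectedComponentIn hσaU⟩
end

section
/- Let $(V,L)$ be a Lorentz-Minkowski space, $v_1$ timelike and $v_2$ causal in the same component $J^\alpha$. Then $v_1+v_2$ is timelike and lies in $I^\alpha=\mathrm{Int}\,J^\alpha$. -/
open Set Metric Filter Topology

namespace LorentzProof

variable {n : ℕ}

local notation "V" => EuclideanSpace ℝ (Fin (n + 1))

/-! ### Linear algebra of the Minkowski form -/

private noncomputable def eta (P Q : ℝ × EuclideanSpace ℝ (Fin n)) : ℝ :=
  -(P.1 * Q.1) + (inner ℝ P.2 Q.2 : ℝ)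

private lemma eta_nondeg {P : ℝ × EuclideanSpace ℝ (Fin n)}
    (h : ∀ Q, eta P Q = 0) : P = 0 := by
  have h1 := h (-P.1, P.2)
  simp only [eta] at h1
  rw [real_inner_self_eq_norm_sq] at h1
  have h2 : P.1 ^ 2 + ‖P.2‖ ^ 2 = 0 := by nlinarith
  have h3 : P.1 = 0 := by nlinarith [sq_nonneg P.1, sq_nonneg ‖P.2‖]
  have h4 : ‖P.2‖ = 0 := by nlinarith [sq_nonneg P.1, sq_nonneg ‖P.2‖]
  have h5 : P.2 = 0 := norm_eq_zero.mp h4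
  rw [Prod.ext_iff]
  exact ⟨by simpa using h3, by simpa using h5⟩

private lemma eta_null_psd {P D : ℝ × EuclideanSpace ℝ (Fin n)}
    (hP0 : P ≠ 0) (hPP : eta P P = 0) (hPD : eta P D = 0) :
    0 ≤ eta D D ∧ (eta D D = 0 → ∃ μ : ℝ, D = μ • P) := by
  obtain ⟨a, b⟩ := P
  obtain ⟨c, d⟩ := D
  simp only [eta] at hPP hPD ⊢
  rw [real_inner_self_eq_norm_sq] at hPP ⊢
  have ha : a ≠ 0 := by
    intro h0
    apply hP0
    subst h0
    have hb : ‖b‖ = 0 := by nlinarith [norm_nonneg b]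
    have hb' : b = 0 := norm_eq_zero.mp hb
    simp [hb', Prod.ext_iff]
  have ha2 : 0 < a * a := mul_self_pos.mpr ha
  have hb2 : ‖b‖ ^ 2 = a * a := by nlinarith
  have hac : a * c = (inner ℝ b d : ℝ) := by linarith
  set μ : ℝ := (inner ℝ b d : ℝ) / (a * a) with hμ
  have hca : c = μ * a := by
    rw [hμ, div_mul_eq_mul_div, eq_div_iff ha2.ne']
    rw [← hac]; ring
  have hμb : (inner ℝ b d : ℝ) = μ * (a * a) := by
    rw [hμ]; rw [div_mul_cancel₀ _ ha2.ne']
  have h2 : (inner ℝ d (μ • b) : ℝ) = μ * (inner ℝ b d : ℝ) := by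
    rw [real_inner_smul_right, real_inner_comm]
  have h3 : ‖μ • b‖ ^ 2 = μ ^ 2 * ‖b‖ ^ 2 := by
    rw [norm_smul, mul_pow]
    simp [sq_abs]
  have key : -(c * c) + ‖d‖ ^ 2 = ‖d - μ • b‖ ^ 2 := by
    rw [norm_sub_sq_real, h2, h3, hb2, hca, hμb]
    ring
  constructor
  · rw [key]; positivity
  · intro h0
    rw [key] at h0
    have hd : ‖d - μ • b‖ = 0 := (pow_eq_zero_iff (by norm_num : (2:ℕ) ≠ 0)).mp h0
    have hdd : d = μ • b := by rwa [norm_eq_zero, sub_eq_zero] at hd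
    exact ⟨μ, by rw [Prod.ext_iff]; exact ⟨by simpa using hca, by simpa using hdd⟩⟩

private lemma eta_tl_orth {Q Y : ℝ × EuclideanSpace ℝ (Fin n)}
    (hQQ : eta Q Q < 0) (hQY : eta Q Y = 0) (hY : Y ≠ 0) : 0 < eta Y Y := by
  obtain ⟨a, b⟩ := Q
  obtain ⟨c, d⟩ := Y
  simp only [eta] at hQQ hQY ⊢
  rw [real_inner_self_eq_norm_sq] at hQQ ⊢
  have ha : a ≠ 0 := by
    intro h0
    subst h0
    nlinarith [sq_nonneg ‖b‖, norm_nonneg b]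
  have ha2 : 0 < a * a := mul_self_pos.mpr ha
  have hc : a * c = (inner ℝ b d : ℝ) := by linarith
  have hd : d ≠ 0 := by
    intro h0
    subst h0
    apply hY
    simp only [inner_zero_right] at hQY
    have hc0 : c = 0 := by
      rcases mul_eq_zero.mp (show a * c = 0 by linarith) with h | h
      · exact absurd h ha
      · exact h
    simp [hc0, Prod.ext_iff]
  have hdpos : 0 < ‖d‖ ^ 2 := by
    have : ‖d‖ ≠ 0 := fun h => hd (norm_eq_zero.mp h)
    positivity
  have hcs := real_inner_mul_inner_self_le b d
  rw [real_inner_self_eq_norm_sq, real_inner_self_eq_norm_sq] at hcs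
  have h5 : (a * c) * (a * c) ≤ ‖b‖ ^ 2 * ‖d‖ ^ 2 := by rw [hc]; exact hcs
  have h6 : ‖b‖ ^ 2 * ‖d‖ ^ 2 < (a * a) * ‖d‖ ^ 2 :=
    mul_lt_mul_of_pos_right (by linarith) hdpos
  nlinarith [h5, h6, ha2]


section Calc

variable {L : EuclideanSpace ℝ (Fin (n + 1)) → ℝ}

private lemma mem0 {v : V} (hv : v ≠ 0) : v ∈ ({(0 : V)}ᶜ : Set V) := by simpa using hv

private lemma hasF (hC2 : ContDiffOn ℝ 2 L {(0 : V)}ᶜ) {v : V} (hv : v ≠ 0) :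
    HasFDerivAt L (fderiv ℝ L v) v := by
  have h := hC2.contDiffAt (isOpen_compl_singleton.mem_nhds (mem0 hv))
  exact (h.differentiableAt (by norm_num)).hasFDerivAt

private lemma hasF2 (hC2 : ContDiffOn ℝ 2 L {(0 : V)}ᶜ) {v : V} (hv : v ≠ 0) :
    HasFDerivAt (fderiv ℝ L) (fderiv ℝ (fderiv ℝ L) v) v := by
  have h := hC2.contDiffAt (isOpen_compl_singleton.mem_nhds (mem0 hv))
  have h2 : ContDiffAt ℝ 1 (fderiv ℝ L) v := h.fderiv_right (by norm_num)
  exact (h2.differentiableAt (by norm_num)).hasFDerivAt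

private lemma contL (hC2 : ContDiffOn ℝ 2 L {(0 : V)}ᶜ) : ContinuousOn L {(0 : V)}ᶜ :=
  hC2.continuousOn

private lemma contdL (hC2 : ContDiffOn ℝ 2 L {(0 : V)}ᶜ) :
    ContinuousOn (fderiv ℝ L) {(0 : V)}ᶜ :=
  hC2.continuousOn_fderiv_of_isOpen isOpen_compl_singleton (by norm_num)

private lemma contg (hC2 : ContDiffOn ℝ 2 L {(0 : V)}ᶜ) :
    ContinuousOn (fderiv ℝ (fderiv ℝ L)) {(0 : V)}ᶜ :=
  (hC2.fderiv_of_isOpen (m := 1) isOpen_compl_singleton (by norm_num)).continuousOn_fderiv_of_isOpen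
    isOpen_compl_singleton (by norm_num)

private lemma lineHasDeriv {q d : V} (t : ℝ) :
    HasDerivAt (fun s : ℝ => q + s • d) d t := by
  simpa using ((hasDerivAt_id t).smul_const d).const_add q

private lemma lineDeriv (hC2 : ContDiffOn ℝ 2 L {(0 : V)}ᶜ) {q d : V} {t : ℝ}
    (h : q + t • d ≠ 0) :
    HasDerivAt (fun s : ℝ => L (q + s • d)) (fderiv ℝ L (q + t • d) d) t :=
  (hasF hC2 h).comp_hasDerivAt t (lineHasDeriv t)

private lemma lineDeriv2 (hC2 : ContDiffOn ℝ 2 L {(0 : V)}ᶜ) {q d : V} (u : V) {t : ℝ}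
    (h : q + t • d ≠ 0) :
    HasDerivAt (fun s : ℝ => fderiv ℝ L (q + s • d) u)
      (FinslerHess L (q + t • d) d u) t := by
  have h1 : HasDerivAt (fun s : ℝ => fderiv ℝ L (q + s • d))
      (fderiv ℝ (fderiv ℝ L) (q + t • d) d) t :=
    (hasF2 hC2 h).comp_hasDerivAt t (lineHasDeriv t)
  have h2 := h1.clm_apply (hasDerivAt_const t u)
  simpa [FinslerHess] using h2

private lemma euler1 (hC2 : ContDiffOn ℝ 2 L {(0 : V)}ᶜ)
    (hhom : ∀ s : ℝ, 0 < s → ∀ v, L (s • v) = s ^ 2 * L v) {v : V} (hv : v ≠ 0) :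
    fderiv ℝ L v v = 2 * L v := by
  have h1 : HasDerivAt (fun s : ℝ => L ((0 : V) + s • v)) (fderiv ℝ L ((0 : V) + (1 : ℝ) • v) v) 1 :=
    lineDeriv hC2 (by simpa using hv)
  simp only [zero_add, one_smul] at h1
  have h2 : HasDerivAt (fun s : ℝ => s ^ 2 * L v) (2 * L v) 1 := by
    simpa using (hasDerivAt_pow 2 (1 : ℝ)).mul_const (L v)
  have heq : (fun s : ℝ => s ^ 2 * L v) =ᶠ[𝓝 (1 : ℝ)] fun s : ℝ => L (s • v) := by
    filter_upwards [Ioi_mem_nhds (zero_lt_one (α := ℝ))] with s hs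
    exact (hhom s hs v).symm
  exact (h1.congr_of_eventuallyEq heq).unique h2

private lemma scale_dL (hC2 : ContDiffOn ℝ 2 L {(0 : V)}ᶜ)
    (hhom : ∀ s : ℝ, 0 < s → ∀ v, L (s • v) = s ^ 2 * L v) {v : V} (hv : v ≠ 0)
    {s : ℝ} (hs : 0 < s) (u : V) :
    fderiv ℝ L (s • v) u = s * fderiv ℝ L v u := by
  have hsv : s • v ≠ 0 := smul_ne_zero hs.ne' hv
  have hid : HasFDerivAt (fun x : V => s • x) (s • (ContinuousLinearMap.id ℝ V)) v := by
    exact (hasFDerivAt_id v).const_smul s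
  have h1 : HasFDerivAt (fun x : V => L (s • x))
      ((fderiv ℝ L (s • v)).comp (s • (ContinuousLinearMap.id ℝ V))) v :=
    (hasF hC2 hsv).comp v hid
  have h2 : HasFDerivAt (fun x : V => s ^ 2 * L x) ((s ^ 2) • fderiv ℝ L v) v := by
    exact (hasF hC2 hv).const_smul (s ^ 2)
  have hfun : (fun x : V => L (s • x)) = fun x : V => s ^ 2 * L x :=
    funext fun x => hhom s hs x
  rw [hfun] at h1
  have hCLM := h1.unique h2
  have happ := congrArg (fun T : V →L[ℝ] ℝ => T u) hCLM
  simp only [ContinuousLinearMap.comp_apply, ContinuousLinearMap.smul_apply,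
    ContinuousLinearMap.id_apply, smul_eq_mul, map_smul] at happ
  -- happ : s * fderiv ℝ L (s • v) u = s ^ 2 * fderiv ℝ L v u
  have := mul_left_cancel₀ hs.ne' (by rw [happ]; ring : s * (fderiv ℝ L (s • v) u) = s * (s * fderiv ℝ L v u))
  exact this

private lemma euler2 (hC2 : ContDiffOn ℝ 2 L {(0 : V)}ᶜ)
    (hhom : ∀ s : ℝ, 0 < s → ∀ v, L (s • v) = s ^ 2 * L v) {v : V} (hv : v ≠ 0) (u : V) :
    FinslerHess L v v u = fderiv ℝ L v u := by
  have h1 : HasDerivAt (fun s : ℝ => fderiv ℝ L ((0 : V) + s • v) u)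
      (FinslerHess L ((0 : V) + (1 : ℝ) • v) v u) 1 :=
    lineDeriv2 hC2 u (by simpa using hv)
  simp only [zero_add, one_smul] at h1
  have h2 : HasDerivAt (fun s : ℝ => s * fderiv ℝ L v u) (fderiv ℝ L v u) 1 := by
    simpa using hasDerivAt_mul_const (x := (1 : ℝ)) (fderiv ℝ L v u)
  have heq : (fun s : ℝ => s * fderiv ℝ L v u) =ᶠ[𝓝 (1 : ℝ)] fun s : ℝ => fderiv ℝ L (s • v) u := by
    filter_upwards [Ioi_mem_nhds (zero_lt_one (α := ℝ))] with s hs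
    exact (scale_dL hC2 hhom hv hs u).symm
  exact (h1.congr_of_eventuallyEq heq).unique h2

private lemma hess_self (hC2 : ContDiffOn ℝ 2 L {(0 : V)}ᶜ)
    (hhom : ∀ s : ℝ, 0 < s → ∀ v, L (s • v) = s ^ 2 * L v) {v : V} (hv : v ≠ 0) :
    FinslerHess L v v v = 2 * L v := by
  rw [euler2 hC2 hhom hv v, euler1 hC2 hhom hv]

end Calc

section Wrappers

variable {L : EuclideanSpace ℝ (Fin (n + 1)) → ℝ}

private lemma hess_nondeg
    (hLor : ∀ v : V, v ≠ 0 → ∃ φ : V ≃ₗ[ℝ] ℝ × EuclideanSpace ℝ (Fin n),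
      ∀ w u, FinslerHess L v w u = -((φ w).1 * (φ u).1) + (inner ℝ (φ w).2 (φ u).2 : ℝ))
    {v : V} (hv : v ≠ 0) (h : ∀ u, FinslerHess L v v u = 0) : False := by
  obtain ⟨φ, hφ⟩ := hLor v hv
  have h1 : ∀ Q, eta (φ v) Q = 0 := by
    intro Q
    have := h (φ.symm Q)
    rw [hφ] at this
    simpa [eta] using this
  exact hv (by simpa using φ.map_eq_zero_iff.mp (eta_nondeg h1))

private lemma hess_null_psd
    (hLor : ∀ v : V, v ≠ 0 → ∃ φ : V ≃ₗ[ℝ] ℝ × EuclideanSpace ℝ (Fin n),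
      ∀ w u, FinslerHess L v w u = -((φ w).1 * (φ u).1) + (inner ℝ (φ w).2 (φ u).2 : ℝ))
    {v d : V} (hv : v ≠ 0) (hvv : FinslerHess L v v v = 0)
    (hvd : FinslerHess L v v d = 0) :
    0 ≤ FinslerHess L v d d ∧ (FinslerHess L v d d = 0 → ∃ μ : ℝ, d = μ • v) := by
  obtain ⟨φ, hφ⟩ := hLor v hv
  have hconv : ∀ w u, eta (φ w) (φ u) = FinslerHess L v w u := fun w u => (hφ w u).symm
  have hP0 : φ v ≠ 0 := fun h => hv (by simpa using φ.map_eq_zero_iff.mp h)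
  have hPP : eta (φ v) (φ v) = 0 := (hconv v v).trans hvv
  have hPD : eta (φ v) (φ d) = 0 := (hconv v d).trans hvd
  obtain ⟨hpos, heq⟩ := eta_null_psd hP0 hPP hPD
  constructor
  · rw [← hconv d d]; exact hpos
  · intro h0
    obtain ⟨μ, hμ⟩ := heq ((hconv d d).trans h0)
    refine ⟨μ, ?_⟩
    have : φ d = φ (μ • v) := by rw [map_smul]; exact hμ
    exact φ.injective this

private lemma hess_tl_orth
    (hLor : ∀ v : V, v ≠ 0 → ∃ φ : V ≃ₗ[ℝ] ℝ × EuclideanSpace ℝ (Fin n),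
      ∀ w u, FinslerHess L v w u = -((φ w).1 * (φ u).1) + (inner ℝ (φ w).2 (φ u).2 : ℝ))
    {v y : V} (hv : v ≠ 0) (hvv : FinslerHess L v v v < 0)
    (hvy : FinslerHess L v v y = 0) (hy : y ≠ 0) :
    0 < FinslerHess L v y y := by
  obtain ⟨φ, hφ⟩ := hLor v hv
  have hconv : ∀ w u, eta (φ w) (φ u) = FinslerHess L v w u := fun w u => (hφ w u).symm
  have hQQ : eta (φ v) (φ v) < 0 := (hconv v v) ▸ hvv
  have hQY : eta (φ v) (φ y) = 0 := (hconv v y).trans hvy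
  have hY : φ y ≠ 0 := fun h => hy (by simpa using φ.map_eq_zero_iff.mp h)
  have h := eta_tl_orth hQQ hQY hY
  rwa [hconv y y] at h

end Wrappers

/-! ### The timelike and causal sets -/

private def Iset (L : EuclideanSpace ℝ (Fin (n + 1)) → ℝ) :
    Set (EuclideanSpace ℝ (Fin (n + 1))) := {v | v ≠ 0 ∧ L v < 0}

private def Jset (L : EuclideanSpace ℝ (Fin (n + 1)) → ℝ) :
    Set (EuclideanSpace ℝ (Fin (n + 1))) := {v | v ≠ 0 ∧ L v ≤ 0}

section Sets

variable {L : EuclideanSpace ℝ (Fin (n + 1)) → ℝ}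

private lemma Iopen (hC2 : ContDiffOn ℝ 2 L {(0 : V)}ᶜ) : IsOpen (Iset L) := by
  have heq : Iset L = {(0 : V)}ᶜ ∩ L ⁻¹' (Iio 0) := by
    ext v; simp [Iset]
  rw [heq]
  exact (contL hC2).isOpen_inter_preimage isOpen_compl_singleton isOpen_Iio

private lemma Icone (hhom : ∀ s : ℝ, 0 < s → ∀ v, L (s • v) = s ^ 2 * L v)
    {v : V} (hv : v ∈ Iset L) {c : ℝ} (hc : 0 < c) : c • v ∈ Iset L := by
  refine ⟨smul_ne_zero hc.ne' hv.1, ?_⟩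
  rw [hhom c hc]
  exact mul_neg_of_pos_of_neg (by positivity) hv.2

private lemma Tcone (hhom : ∀ s : ℝ, 0 < s → ∀ v, L (s • v) = s ^ 2 * L v)
    {v₁ x : V} (hx : x ∈ connectedComponentIn (Iset L) v₁) {c : ℝ} (hc : 0 < c) :
    c • x ∈ connectedComponentIn (Iset L) v₁ := by
  have hxI : x ∈ Iset L := connectedComponentIn_subset _ _ hx
  have hcont : Continuous (fun t : ℝ => ((1 - t) + t * c) • x) :=
    (((continuous_const.sub continuous_id).add (continuous_id.mul continuous_const))).smul continuous_const
  have hseg : (fun t : ℝ => ((1 - t) + t * c) • x) '' Icc 0 1 ⊆ Iset L := by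
    rintro _ ⟨t, ht, rfl⟩
    have hpos : 0 < (1 - t) + t * c := by
      rcases eq_or_lt_of_le ht.2 with h | h
      · subst h; simpa using hc
      · nlinarith [mul_nonneg ht.1 hc.le]
    exact Icone hhom hxI hpos
  have hconn : IsPreconnected ((fun t : ℝ => ((1 - t) + t * c) • x) '' Icc 0 1) :=
    isPreconnected_Icc.image _ hcont.continuousOn
  have hxmem : x ∈ (fun t : ℝ => ((1 - t) + t * c) • x) '' Icc 0 1 :=
    ⟨0, ⟨le_refl 0, zero_le_one⟩, by norm_num⟩
  have hsub := hconn.subset_connectedComponentIn hxmem hseg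
  rw [connectedComponentIn_eq hx]
  exact hsub ⟨1, ⟨zero_le_one, le_refl 1⟩, by norm_num⟩

end Sets

/-! ### Second-derivative tests -/

private lemma exceed_of_second_pos {f f' f'' : ℝ → ℝ} {a ε : ℝ} (hε : 0 < ε)
    (hf : ∀ t ∈ ball a ε, HasDerivAt f (f' t) t)
    (hf' : ∀ t ∈ ball a ε, HasDerivAt f' (f'' t) t)
    (hcont : ContinuousAt f'' a)
    (hf'a : f' a = 0) (hpos : 0 < f'' a) :
    ∃ b, b ∈ ball a ε ∧ a < b ∧ f a < f b := by
  have hmem : f'' ⁻¹' Ioi 0 ∈ 𝓝 a := hcont.preimage_mem_nhds (Ioi_mem_nhds hpos)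
  obtain ⟨ε₁, hε₁, hball₁⟩ := Metric.mem_nhds_iff.mp hmem
  set ε' := min ε₁ ε with hε'def
  have hε' : 0 < ε' := lt_min hε₁ hε
  have hsub : ball a ε' ⊆ ball a ε := ball_subset_ball (min_le_right _ _)
  have hpos' : ∀ t ∈ ball a ε', 0 < f'' t := fun t ht =>
    hball₁ (ball_subset_ball (min_le_left _ _) ht)
  have hmono : StrictMonoOn f' (ball a ε') := by
    apply strictMonoOn_of_deriv_pos (convex_ball a ε')
    · exact fun t ht => ((hf' t (hsub ht)).differentiableAt.continuousAt).continuousWithinAt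
    · intro t ht
      rw [isOpen_ball.interior_eq] at ht
      rw [(hf' t (hsub ht)).deriv]
      exact hpos' t ht
  set b := a + ε' / 2 with hbdef
  have hab : a < b := by simp only [hbdef, lt_add_iff_pos_right]; positivity
  have hIccsub : Icc a b ⊆ ball a ε' := by
    intro t ht
    rw [mem_ball, dist_eq_norm, Real.norm_eq_abs, abs_of_nonneg (by linarith [ht.1])]
    have := ht.2
    simp only [hbdef] at this
    linarith
  have hamem : a ∈ ball a ε' := mem_ball_self hε'
  have hfmono : StrictMonoOn f (Icc a b) := by
    apply strictMonoOn_of_deriv_pos (convex_Icc a b)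
    · exact fun t ht =>
        ((hf t (hsub (hIccsub ht))).differentiableAt.continuousAt).continuousWithinAt
    · intro t ht
      rw [interior_Icc] at ht
      have htb : t ∈ ball a ε' := hIccsub ⟨ht.1.le, ht.2.le⟩
      rw [(hf t (hsub htb)).deriv]
      have := hmono hamem htb ht.1
      linarith
  exact ⟨b, hsub (hIccsub (right_mem_Icc.mpr hab.le)), hab,
    hfmono (left_mem_Icc.mpr hab.le) (right_mem_Icc.mpr hab.le) hab⟩

private lemma second_le_of_localmax {f f' f'' : ℝ → ℝ} {a ε : ℝ} (hε : 0 < ε)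
    (hf : ∀ t ∈ ball a ε, HasDerivAt f (f' t) t)
    (hf' : ∀ t ∈ ball a ε, HasDerivAt f' (f'' t) t)
    (hcont : ContinuousAt f'' a)
    (hmax : ∀ t ∈ ball a ε, f t ≤ f a) :
    f' a = 0 ∧ f'' a ≤ 0 := by
  have hlm : IsLocalMax f a := eventually_of_mem (ball_mem_nhds a hε) hmax
  have h1 : f' a = 0 := hlm.hasDerivAt_eq_zero (hf a (mem_ball_self hε))
  refine ⟨h1, ?_⟩
  by_contra hpos
  push_neg at hpos
  obtain ⟨b, hb, _, hfb⟩ := exceed_of_second_pos hε hf hf' hcont h1 hpos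
  exact absurd (hmax b hb) (not_le.mpr hfb)

private lemma line_ne_nbhd {q d : EuclideanSpace ℝ (Fin (n + 1))} {t₀ : ℝ}
    (h : q + t₀ • d ≠ 0) :
    ∃ ε > 0, ∀ t ∈ ball t₀ ε, q + t • d ≠ (0 : V) := by
  have hcont : Continuous fun t : ℝ => q + t • d :=
    continuous_const.add (continuous_id.smul continuous_const)
  have hm : (fun t : ℝ => q + t • d) ⁻¹' {(0 : V)}ᶜ ∈ 𝓝 t₀ :=
    hcont.continuousAt.preimage_mem_nhds (isOpen_compl_singleton.mem_nhds (mem0 h))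
  obtain ⟨ε, hε, hb⟩ := Metric.mem_nhds_iff.mp hm
  exact ⟨ε, hε, fun t ht => by simpa using hb ht⟩

section ContH

variable {L : EuclideanSpace ℝ (Fin (n + 1)) → ℝ}

private lemma contAt_H (hC2 : ContDiffOn ℝ 2 L {(0 : V)}ᶜ) {c : ℝ → V} {t : ℝ}
    (hc : Continuous c) (h : c t ≠ 0) (d u : V) :
    ContinuousAt (fun s => FinslerHess L (c s) d u) t := by
  have h1 : ContinuousAt (fderiv ℝ (fderiv ℝ L)) (c t) :=
    (contg hC2).continuousAt (isOpen_compl_singleton.mem_nhds (mem0 h))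
  have h2 : ContinuousAt (fun s => fderiv ℝ (fderiv ℝ L) (c s)) t := h1.comp hc.continuousAt
  have h3 : ContinuousAt (fun s => fderiv ℝ (fderiv ℝ L) (c s) d) t :=
    ((ContinuousLinearMap.apply ℝ (V →L[ℝ] ℝ) d).continuous.continuousAt).comp h2
  exact ((ContinuousLinearMap.apply ℝ ℝ u).continuous.continuousAt).comp h3

private lemma contF (hC2 : ContDiffOn ℝ 2 L {(0 : V)}ᶜ) :
    ContinuousOn (fun z : V × V => FinslerHess L z.1 z.1 z.2) {z : V × V | z.1 ≠ 0} := by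
  have h1 : ContinuousOn (fun z : V × V => fderiv ℝ (fderiv ℝ L) z.1) {z : V × V | z.1 ≠ 0} :=
    (contg hC2).comp continuous_fst.continuousOn (fun z hz => by simpa using hz)
  exact (h1.clm_apply continuous_fst.continuousOn).clm_apply continuous_snd.continuousOn

end ContH

section SegClosed

variable {L : EuclideanSpace ℝ (Fin (n + 1)) → ℝ}

set_option maxHeartbeats 1000000 in
private lemma seg_closed (hC2 : ContDiffOn ℝ 2 L {(0 : V)}ᶜ)
    (hhom : ∀ s : ℝ, 0 < s → ∀ v, L (s • v) = s ^ 2 * L v)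
    (hLor : ∀ v : V, v ≠ 0 → ∃ φ : V ≃ₗ[ℝ] ℝ × EuclideanSpace ℝ (Fin n),
      ∀ w u, FinslerHess L v w u = -((φ w).1 * (φ u).1) + (inner ℝ (φ w).2 (φ u).2 : ℝ))
    {q y : V} (hq : q ≠ 0) (hy : y ≠ 0) (hLq : L q < 0) (hLy : L y < 0)
    (hcl : ∀ t ∈ Icc (0 : ℝ) 1, q + t • (y - q) ∈ closure (Iset L))
    (hgle : FinslerHess L q q y ≤ 0) :
    (∀ t ∈ Icc (0 : ℝ) 1, q + t • (y - q) ∈ Iset L) ∧ FinslerHess L q q y < 0 := by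
  set d := y - q with hd
  clear_value d
  have hm0 : q + (0 : ℝ) • d = q := by simp
  have hm1 : q + (1 : ℝ) • d = y := by simp [hd]
  -- Step 1: the segment avoids the origin
  have step1 : ∀ t ∈ Icc (0 : ℝ) 1, q + t • d ≠ 0 := by
    intro t ht h0
    have ht0 : t ≠ 0 := by rintro rfl; rw [hm0] at h0; exact hq h0
    have ht1 : t ≠ 1 := by rintro rfl; rw [hm1] at h0; exact hy h0
    have htpos : 0 < t := lt_of_le_of_ne ht.1 (Ne.symm ht0)
    have hb : t • d = -q := by
      have h' := h0
      rw [add_comm q (t • d)] at h'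
      exact eq_neg_of_add_eq_zero_left h'
    have h4 : t • y = (t - 1) • q := by
      rw [hd, smul_sub] at hb
      rw [sub_smul, one_smul]
      have h5 := eq_add_of_sub_eq hb
      rw [h5]; abel
    have hy2 : y = ((t - 1) / t) • q := by
      have h5 := congrArg (fun z => (t⁻¹ : ℝ) • z) h4
      simp only [smul_smul] at h5
      rw [inv_mul_cancel₀ ht0, one_smul] at h5
      rw [h5]
      congr 1
      field_simp
    set c : ℝ := (1 - t) / t with hcdef
    have hcpos : 0 < c := div_pos (by linarith [lt_of_le_of_ne ht.2 ht1]) htpos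
    have hyc : y = (-c) • q := by rw [hy2]; congr 1; rw [hcdef]; ring
    have hHqq : FinslerHess L q q q = 2 * L q := hess_self hC2 hhom hq
    have hH : FinslerHess L q q y = -c * (2 * L q) := by
      rw [hyc, ← hHqq]
      simp only [FinslerHess, map_smul, smul_eq_mul]
    have hpos2 : 0 < FinslerHess L q q y := by
      rw [hH]; nlinarith [mul_pos hcpos (neg_pos.mpr hLq)]
    linarith
  -- Step 2: L ≤ 0 on the segment
  have step2 : ∀ t ∈ Icc (0 : ℝ) 1, L (q + t • d) ≤ 0 := by
    intro t ht
    have hne := step1 t ht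
    obtain ⟨x, hx, hxlim⟩ := mem_closure_iff_seq_limit.mp (hcl t ht)
    have hLcont : ContinuousAt L (q + t • d) :=
      (contL hC2).continuousAt (isOpen_compl_singleton.mem_nhds (mem0 hne))
    have htd : Tendsto (fun k => L (x k)) atTop (𝓝 (L (q + t • d))) :=
      hLcont.tendsto.comp hxlim
    exact le_of_tendsto htd (Eventually.of_forall fun k => (hx k).2.le)
  -- Step 3: L < 0 on the segment
  have step3 : ∀ t ∈ Icc (0 : ℝ) 1, L (q + t • d) < 0 := by
    intro t ht
    rcases lt_or_eq_of_le (step2 t ht) with hlt | heq0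
    · exact hlt
    exfalso
    have hne : q + t • d ≠ 0 := step1 t ht
    have ht0 : t ≠ 0 := by rintro rfl; rw [hm0] at heq0; linarith
    have ht1 : t ≠ 1 := by rintro rfl; rw [hm1] at heq0; linarith
    have htpos : 0 < t := lt_of_le_of_ne ht.1 (Ne.symm ht0)
    have htlt : t < 1 := lt_of_le_of_ne ht.2 ht1
    obtain ⟨ε₀, hε₀pos, hne'⟩ := line_ne_nbhd hne
    set ε : ℝ := min ε₀ (min t (1 - t)) with hεdef
    have hεpos : 0 < ε := lt_min hε₀pos (lt_min htpos (by linarith))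
    have hball_sub : ∀ s ∈ ball t ε, s ∈ Icc (0 : ℝ) 1 := by
      intro s hs
      rw [mem_ball, dist_eq_norm, Real.norm_eq_abs] at hs
      have h1 : |s - t| < t := lt_of_lt_of_le hs (le_trans (min_le_right _ _) (min_le_left _ _))
      have h2 : |s - t| < 1 - t := lt_of_lt_of_le hs (le_trans (min_le_right _ _) (min_le_right _ _))
      rw [abs_lt] at h1 h2
      constructor <;> linarith [h1.1, h1.2, h2.1, h2.2]
    have hball_ne : ∀ s ∈ ball t ε, q + s • d ≠ 0 := fun s hs =>
      hne' s (ball_subset_ball (min_le_left _ _) hs)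
    have hf : ∀ s ∈ ball t ε, HasDerivAt (fun r : ℝ => L (q + r • d))
        (fderiv ℝ L (q + s • d) d) s := fun s hs => lineDeriv hC2 (hball_ne s hs)
    have hf' : ∀ s ∈ ball t ε, HasDerivAt (fun r : ℝ => fderiv ℝ L (q + r • d) d)
        (FinslerHess L (q + s • d) d d) s := fun s hs => lineDeriv2 hC2 d (hball_ne s hs)
    have hlined : Continuous fun s : ℝ => q + s • d :=
      continuous_const.add (continuous_id.smul continuous_const)
    have hcontf'' : ContinuousAt (fun s : ℝ => FinslerHess L (q + s • d) d d) t :=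
      contAt_H hC2 hlined hne d d
    have hmax : ∀ s ∈ ball t ε, L (q + s • d) ≤ L (q + t • d) := by
      intro s hs
      rw [heq0]
      exact step2 s (hball_sub s hs)
    obtain ⟨hf'0, hf''le⟩ := second_le_of_localmax hεpos hf hf' hcontf'' hmax
    -- translate
    set p := q + t • d with hp
    clear_value p
    have hHpd : FinslerHess L p p d = 0 := by rw [euler2 hC2 hhom hne d]; exact hf'0
    have hHpp : FinslerHess L p p p = 0 := by
      rw [hess_self hC2 hhom hne, heq0]; ring
    obtain ⟨hpsd, heqcase⟩ := hess_null_psd hLor hne hHpp hHpd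
    have hHdd0 : FinslerHess L p d d = 0 := le_antisymm hf''le hpsd
    obtain ⟨μ, hdμ⟩ := heqcase hHdd0
    have hd0 : d ≠ 0 := by
      intro h0
      rw [hp, h0] at heq0
      simp at heq0
      linarith
    have hμ0 : μ ≠ 0 := by rintro rfl; rw [zero_smul] at hdμ; exact hd0 hdμ
    have hq2 : q = (1 - t * μ) • p := by
      have h1 : q = p - t • d := by rw [hp]; abel
      rw [h1, hdμ, smul_smul, sub_smul, one_smul]
    set a : ℝ := 1 - t * μ with hadef
    clear_value a
    have ha0 : a ≠ 0 := by
      intro h0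
      apply hq
      rw [hq2, h0, zero_smul]
    rcases lt_or_gt_of_ne ha0 with haneg | hapos
    · -- a < 0 : the segment passes through the origin
      have hμpos : 0 < μ := by
        have : 1 < t * μ := by rw [hadef] at haneg; linarith
        nlinarith [htpos, htlt]
      set s₁ : ℝ := (t * μ - 1) / μ with hs₁def
      clear_value s₁
      have hs₁pos : 0 < s₁ := by
        rw [hs₁def]
        apply div_pos _ hμpos
        rw [hadef] at haneg; linarith
      have hs₁lt : s₁ < t := by
        rw [hs₁def, div_lt_iff₀ hμpos]
        linarith
      have hs₁mem : s₁ ∈ Icc (0 : ℝ) 1 := ⟨hs₁pos.le, by linarith⟩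
      apply step1 s₁ hs₁mem
      rw [hq2, hdμ, smul_smul, ← add_smul]
      have hcoef0 : a + s₁ * μ = 0 := by
        rw [hadef, hs₁def, div_mul_cancel₀ _ hμ0]; ring
      rw [hcoef0, zero_smul]
    · -- a > 0 : contradiction with homogeneity
      have hLqa : L q = a ^ 2 * L p := by rw [hq2, hhom a hapos]
      rw [heq0, mul_zero] at hLqa
      linarith
  have seg_mem : ∀ t ∈ Icc (0 : ℝ) 1, q + t • d ∈ Iset L := fun t ht =>
    ⟨step1 t ht, step3 t ht⟩
  refine ⟨seg_mem, ?_⟩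
  -- Step 4: strictness
  by_contra hstrict
  have hH0 : FinslerHess L q q y = 0 := le_antisymm hgle (not_lt.mp hstrict)
  have hHy : 0 < FinslerHess L q y y :=
    hess_tl_orth hLor hq (by rw [hess_self hC2 hhom hq]; linarith) hH0 hy
  -- the ray q + t y stays in Iset
  have hrayI : ∀ t : ℝ, 0 ≤ t → q + t • y ∈ Iset L := by
    intro t ht
    have h1t : (0 : ℝ) < 1 + t := by linarith
    have hsmem : t / (1 + t) ∈ Icc (0 : ℝ) 1 := by
      constructor
      · positivity
      · rw [div_le_one h1t]; linarith
    have hraym : q + t • y = (1 + t) • (q + (t / (1 + t)) • d) := by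
      have hcoef : (1 + t) * (t / (1 + t)) = t := by field_simp
      rw [hd, smul_add, smul_smul, hcoef, smul_sub, add_smul, one_smul]
      abel
    rw [hraym]
    exact Icone hhom (seg_mem _ hsmem) h1t
  set f₂ : ℝ → ℝ := fun t => L (q + t • y) with hf₂def
  have hf₂0 : f₂ 0 = L q := by simp [hf₂def]
  -- first derivative vanishes at 0
  obtain ⟨ε₀, hε₀pos, hne₀⟩ := line_ne_nbhd (q := q) (d := y) (t₀ := 0) (by simpa using hq)
  have hf : ∀ s ∈ ball (0 : ℝ) ε₀, HasDerivAt f₂ (fderiv ℝ L (q + s • y) y) s :=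
    fun s hs => lineDeriv hC2 (hne₀ s hs)
  have hf' : ∀ s ∈ ball (0 : ℝ) ε₀, HasDerivAt (fun r : ℝ => fderiv ℝ L (q + r • y) y)
      (FinslerHess L (q + s • y) y y) s := fun s hs => lineDeriv2 hC2 y (hne₀ s hs)
  have hliney : Continuous fun s : ℝ => q + s • y :=
    continuous_const.add (continuous_id.smul continuous_const)
  have hcont0 : ContinuousAt (fun s : ℝ => FinslerHess L (q + s • y) y y) 0 :=
    contAt_H hC2 hliney (by simpa using hq) y y
  have hf'00 : fderiv ℝ L (q + (0 : ℝ) • y) y = 0 := by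
    have : q + (0 : ℝ) • y = q := by simp
    rw [this, ← euler2 hC2 hhom hq y]
    exact hH0
  have hpos0 : (0 : ℝ) < FinslerHess L (q + (0 : ℝ) • y) y y := by
    have : q + (0 : ℝ) • y = q := by simp
    rw [this]; exact hHy
  obtain ⟨b, hbball, hbpos, hfb⟩ :=
    exceed_of_second_pos hε₀pos hf hf' hcont0 hf'00 hpos0
  -- tail estimate
  have hLy2 : L y / 2 < 0 := by linarith
  obtain ⟨ρ, hρpos, hρ⟩ : ∃ ρ > 0, ∀ z : V, dist z y < ρ → L z ≤ L y / 2 := by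
    have hLcy : ContinuousAt L y :=
      (contL hC2).continuousAt (isOpen_compl_singleton.mem_nhds (mem0 hy))
    have hm : L ⁻¹' Iio (L y / 2) ∈ 𝓝 y :=
      hLcy.preimage_mem_nhds (Iio_mem_nhds (by linarith))
    obtain ⟨ρ, hρpos, hball⟩ := Metric.mem_nhds_iff.mp hm
    exact ⟨ρ, hρpos, fun z hz => (hball (mem_ball.mpr hz)).le⟩
  set R : ℝ := (L q - 1) / (L y / 2) with hRdef
  set T : ℝ := max (max 1 b) (max (‖q‖ / ρ + 1) (Real.sqrt R + 1)) with hTdef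
  have hT1 : (1 : ℝ) ≤ T := le_trans (le_max_left 1 b) (le_max_left _ _)
  have hTb : b ≤ T := le_trans (le_max_right 1 b) (le_max_left _ _)
  have hTq : ‖q‖ / ρ + 1 ≤ T := le_trans (le_max_left _ _) (le_max_right _ _)
  have hTR : Real.sqrt R + 1 ≤ T := le_trans (le_max_right _ _) (le_max_right _ _)
  have htail : ∀ t : ℝ, T < t → f₂ t < L q := by
    intro t hTt
    have htpos : (0 : ℝ) < t := by linarith
    have hsplit : q + t • y = t • (y + t⁻¹ • q) := by
      rw [smul_add, smul_smul, mul_inv_cancel₀ htpos.ne', one_smul]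
      abel
    have hdist : dist (y + t⁻¹ • q) y < ρ := by
      rw [dist_eq_norm]
      have h1 : y + t⁻¹ • q - y = t⁻¹ • q := by abel
      rw [h1, norm_smul, Real.norm_eq_abs, abs_of_pos (by positivity)]
      rw [inv_mul_eq_div, div_lt_iff₀ htpos]
      have h2 : ‖q‖ / ρ < t := by linarith
      rw [div_lt_iff₀ hρpos] at h2
      linarith [h2]
    have hLz : L (y + t⁻¹ • q) ≤ L y / 2 := hρ _ hdist
    have hval : f₂ t = t ^ 2 * L (y + t⁻¹ • q) := by
      rw [hf₂def]; simp only
      rw [hsplit, hhom t htpos]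
    have hRt : R < t ^ 2 := by
      rcases le_or_gt 0 R with hR | hR
      · have h3 : Real.sqrt R < t := by linarith
        have h4 := Real.sq_sqrt hR
        nlinarith [Real.sqrt_nonneg R]
      · nlinarith
    have h5 : t ^ 2 * (L y / 2) < R * (L y / 2) := by
      exact mul_lt_mul_of_neg_right hRt hLy2
    have h6 : R * (L y / 2) = L q - 1 := by
      rw [hRdef, div_mul_cancel₀ _ hLy2.ne]
    have h7 : f₂ t ≤ t ^ 2 * (L y / 2) := by
      rw [hval]
      exact mul_le_mul_of_nonneg_left hLz (by positivity)
    linarith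
  -- maximum on [0, T]
  have hcontf₂ : ContinuousOn f₂ (Icc 0 T) := by
    apply ContinuousOn.comp (contL hC2) hliney.continuousOn
    intro t ht
    exact mem0 (hrayI t ht.1).1
  obtain ⟨tm, htm_mem, htm_max⟩ :=
    isCompact_Icc.exists_isMaxOn (nonempty_Icc.mpr (by linarith)) hcontf₂
  have hglobal : ∀ t : ℝ, 0 ≤ t → f₂ t ≤ f₂ tm := by
    intro t ht
    rcases le_or_gt t T with h | h
    · exact htm_max ⟨ht, h⟩
    · have h1 := htail t h
      have h2 : f₂ 0 ≤ f₂ tm := htm_max ⟨le_refl 0, by linarith⟩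
      rw [hf₂0] at h2
      linarith
  have hbmax : f₂ b ≤ f₂ tm := hglobal b hbpos.le
  have hfmgt : f₂ 0 < f₂ tm := by rw [hf₂0] at hfb ⊢; linarith
  have htmpos : 0 < tm := by
    rcases lt_or_eq_of_le htm_mem.1 with h | h
    · exact h
    · exfalso; rw [← h] at hfmgt; exact lt_irrefl _ hfmgt
  -- second order test at tm
  have hpm : q + tm • y ∈ Iset L := hrayI tm htmpos.le
  obtain ⟨ε₁, hε₁pos, hne₁⟩ := line_ne_nbhd (q := q) (d := y) (t₀ := tm) hpm.1
  set ε₂ : ℝ := min ε₁ tm with hε₂def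
  have hε₂pos : 0 < ε₂ := lt_min hε₁pos htmpos
  have hball₂ : ∀ s ∈ ball tm ε₂, 0 ≤ s := by
    intro s hs
    rw [mem_ball, dist_eq_norm, Real.norm_eq_abs, abs_lt] at hs
    have := hs.1
    have h2 : ε₂ ≤ tm := min_le_right _ _
    linarith
  have hfm : ∀ s ∈ ball tm ε₂, HasDerivAt f₂ (fderiv ℝ L (q + s • y) y) s :=
    fun s hs => lineDeriv hC2 (hne₁ s (ball_subset_ball (min_le_left _ _) hs))
  have hfm' : ∀ s ∈ ball tm ε₂, HasDerivAt (fun r : ℝ => fderiv ℝ L (q + r • y) y)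
      (FinslerHess L (q + s • y) y y) s :=
    fun s hs => lineDeriv2 hC2 y (hne₁ s (ball_subset_ball (min_le_left _ _) hs))
  have hcontm : ContinuousAt (fun s : ℝ => FinslerHess L (q + s • y) y y) tm :=
    contAt_H hC2 hliney hpm.1 y y
  have hmaxm : ∀ s ∈ ball tm ε₂, f₂ s ≤ f₂ tm := fun s hs => hglobal s (hball₂ s hs)
  obtain ⟨hfm'0, hfm''le⟩ := second_le_of_localmax hε₂pos hfm hfm' hcontm hmaxm
  have hHpsy : FinslerHess L (q + tm • y) (q + tm • y) y = 0 := by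
    rw [euler2 hC2 hhom hpm.1 y]; exact hfm'0
  have hHpp : FinslerHess L (q + tm • y) (q + tm • y) (q + tm • y) < 0 := by
    rw [hess_self hC2 hhom hpm.1]; linarith [hpm.2]
  have := hess_tl_orth hLor hpm.1 hHpp hHpsy hy
  linarith

end SegClosed

section Convexity

variable {L : EuclideanSpace ℝ (Fin (n + 1)) → ℝ}

set_option maxHeartbeats 1000000 in
private lemma Tconvex (hC2 : ContDiffOn ℝ 2 L {(0 : V)}ᶜ)
    (hhom : ∀ s : ℝ, 0 < s → ∀ v, L (s • v) = s ^ 2 * L v)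
    (hLor : ∀ v : V, v ≠ 0 → ∃ φ : V ≃ₗ[ℝ] ℝ × EuclideanSpace ℝ (Fin n),
      ∀ w u, FinslerHess L v w u = -((φ w).1 * (φ u).1) + (inner ℝ (φ w).2 (φ u).2 : ℝ))
    {v₁ : V} (hv₁ : v₁ ∈ Iset L) :
    ∀ q ∈ connectedComponentIn (Iset L) v₁, ∀ y ∈ connectedComponentIn (Iset L) v₁,
      ∀ t ∈ Icc (0 : ℝ) 1, q + t • (y - q) ∈ Iset L := by
  set T := connectedComponentIn (Iset L) v₁ with hT
  set U : Set (V × V) := {z | z.1 ≠ 0 ∧ FinslerHess L z.1 z.1 z.2 < 0 ∧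
    ∀ t ∈ Icc (0 : ℝ) 1, z.1 + t • (z.2 - z.1) ∈ Iset L} with hU
  have hTI : T ⊆ Iset L := connectedComponentIn_subset _ _
  -- U is open
  have hUopen : IsOpen U := by
    have h1 : IsOpen {z : V × V | z.1 ≠ 0 ∧ FinslerHess L z.1 z.1 z.2 < 0} := by
      have heq : {z : V × V | z.1 ≠ 0 ∧ FinslerHess L z.1 z.1 z.2 < 0}
          = {z : V × V | z.1 ≠ 0} ∩ (fun z : V × V => FinslerHess L z.1 z.1 z.2) ⁻¹' (Iio 0) := by
        ext z; simp [mem_setOf_eq]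
      rw [heq]
      exact (contF hC2).isOpen_inter_preimage
        (isOpen_compl_singleton.preimage continuous_fst) isOpen_Iio
    have h2 : IsOpen {z : V × V | ∀ t ∈ Icc (0 : ℝ) 1, z.1 + t • (z.2 - z.1) ∈ Iset L} := by
      rw [Metric.isOpen_iff]
      intro z hz
      have hK : IsCompact ((fun t : ℝ => z.1 + t • (z.2 - z.1)) '' Icc 0 1) :=
        isCompact_Icc.image (continuous_const.add (continuous_id.smul continuous_const))
      have hKsub : (fun t : ℝ => z.1 + t • (z.2 - z.1)) '' Icc 0 1 ⊆ Iset L := by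
        rintro _ ⟨t, ht, rfl⟩; exact hz t ht
      obtain ⟨δ, hδpos, hδ⟩ := hK.exists_thickening_subset_open (Iopen hC2) hKsub
      refine ⟨δ / 2, by positivity, ?_⟩
      intro z' hz' t ht
      apply hδ
      rw [mem_thickening_iff]
      refine ⟨z.1 + t • (z.2 - z.1), ⟨t, ht, rfl⟩, ?_⟩
      have hd1 : dist z'.1 z.1 < δ / 2 :=
        lt_of_le_of_lt (by rw [Prod.dist_eq]; exact le_max_left _ _) hz'
      have hd2 : dist z'.2 z.2 < δ / 2 :=
        lt_of_le_of_lt (by rw [Prod.dist_eq]; exact le_max_right _ _) hz'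
      have hcomb : z'.1 + t • (z'.2 - z'.1) - (z.1 + t • (z.2 - z.1))
          = (1 - t) • (z'.1 - z.1) + t • (z'.2 - z.2) := by
        module
      rw [dist_eq_norm, hcomb]
      calc ‖(1 - t) • (z'.1 - z.1) + t • (z'.2 - z.2)‖
          ≤ ‖(1 - t) • (z'.1 - z.1)‖ + ‖t • (z'.2 - z.2)‖ := norm_add_le _ _
        _ = (1 - t) * ‖z'.1 - z.1‖ + t * ‖z'.2 - z.2‖ := by
            rw [norm_smul, norm_smul, Real.norm_eq_abs, Real.norm_eq_abs,
              abs_of_nonneg (by linarith [ht.2]), abs_of_nonneg ht.1]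
        _ < δ := by
            rw [dist_eq_norm] at hd1 hd2
            nlinarith [ht.1, ht.2, norm_nonneg (z'.1 - z.1), norm_nonneg (z'.2 - z.2)]
    have heq : U = {z : V × V | z.1 ≠ 0 ∧ FinslerHess L z.1 z.1 z.2 < 0}
        ∩ {z : V × V | ∀ t ∈ Icc (0 : ℝ) 1, z.1 + t • (z.2 - z.1) ∈ Iset L} := by
      ext z; simp only [hU, mem_setOf_eq, mem_inter_iff]; tauto
    rw [heq]
    exact h1.inter h2
  -- T ×ˢ T is preconnected
  have hTconn : IsConnected T := isConnected_connectedComponentIn_iff.mpr hv₁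
  have hprod : IsPreconnected (T ×ˢ T) := hTconn.isPreconnected.prod hTconn.isPreconnected
  -- nonempty intersection
  have hv₁T : v₁ ∈ T := mem_connectedComponentIn hv₁
  have hdiag : (v₁, v₁) ∈ T ×ˢ T ∩ U := by
    refine ⟨⟨hv₁T, hv₁T⟩, hv₁.1, ?_, ?_⟩
    · rw [hess_self hC2 hhom hv₁.1]; linarith [hv₁.2]
    · intro t ht; simpa using hv₁
  -- closure condition
  have hclos : closure U ∩ T ×ˢ T ⊆ U := by
    rintro ⟨q, y⟩ ⟨hcl, hqT, hyT⟩
    have hqI : q ∈ Iset L := hTI hqT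
    have hyI : y ∈ Iset L := hTI hyT
    obtain ⟨w, hw, hwlim⟩ := mem_closure_iff_seq_limit.mp hcl
    -- limit of the Hessian values
    have hgle : FinslerHess L q q y ≤ 0 := by
      have hcontH : ContinuousAt (fun z : V × V => FinslerHess L z.1 z.1 z.2) (q, y) := by
        apply (contF hC2).continuousAt
        exact (isOpen_compl_singleton.preimage continuous_fst).mem_nhds (by simpa using hqI.1)
      have htd : Tendsto (fun k => FinslerHess L (w k).1 (w k).1 (w k).2) atTop
          (𝓝 (FinslerHess L q q y)) := hcontH.tendsto.comp hwlim
      exact le_of_tendsto htd (Eventually.of_forall fun k => ((hw k).2.1).le)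
    -- limit of the segments
    have hcl2 : ∀ t ∈ Icc (0 : ℝ) 1, q + t • (y - q) ∈ closure (Iset L) := by
      intro t ht
      have hmap : Continuous fun z : V × V => z.1 + t • (z.2 - z.1) :=
        continuous_fst.add ((continuous_snd.sub continuous_fst).const_smul t)
      have htd : Tendsto (fun k => (w k).1 + t • ((w k).2 - (w k).1)) atTop
          (𝓝 (q + t • (y - q))) := (hmap.tendsto (q, y)).comp hwlim
      exact mem_closure_of_tendsto htd (Eventually.of_forall fun k => (hw k).2.2 t ht)
    obtain ⟨hseg, hstrict⟩ := seg_closed hC2 hhom hLor hqI.1 hyI.1 hqI.2 hyI.2 hcl2 hgle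
    exact ⟨hqI.1, hstrict, hseg⟩
  have hsub : T ×ˢ T ⊆ U :=
    hprod.subset_of_closure_inter_subset hUopen ⟨(v₁, v₁), hdiag⟩ hclos
  intro q hq y hy t ht
  exact (hsub (show (q, y) ∈ T ×ˢ T from ⟨hq, hy⟩)).2.2 t ht

end Convexity

section Sum

variable {L : EuclideanSpace ℝ (Fin (n + 1)) → ℝ}

private lemma Tadd (hC2 : ContDiffOn ℝ 2 L {(0 : V)}ᶜ)
    (hhom : ∀ s : ℝ, 0 < s → ∀ v, L (s • v) = s ^ 2 * L v)
    (hLor : ∀ v : V, v ≠ 0 → ∃ φ : V ≃ₗ[ℝ] ℝ × EuclideanSpace ℝ (Fin n),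
      ∀ w u, FinslerHess L v w u = -((φ w).1 * (φ u).1) + (inner ℝ (φ w).2 (φ u).2 : ℝ))
    {v₁ : V} (hv₁ : v₁ ∈ Iset L) {a b : V}
    (ha : a ∈ connectedComponentIn (Iset L) v₁) (hb : b ∈ connectedComponentIn (Iset L) v₁) :
    a + b ∈ connectedComponentIn (Iset L) v₁ := by
  have hseg := Tconvex hC2 hhom hLor hv₁ a ha b hb
  have hcontseg : Continuous (fun t : ℝ => a + t • (b - a)) :=
    continuous_const.add (continuous_id.smul continuous_const)
  have hsub : (fun t : ℝ => a + t • (b - a)) '' Icc 0 1 ⊆ connectedComponentIn (Iset L) a :=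
    (isPreconnected_Icc.image _ hcontseg.continuousOn).subset_connectedComponentIn
      ⟨0, ⟨le_refl 0, zero_le_one⟩, by simp⟩ (by rintro _ ⟨t, ht, rfl⟩; exact hseg t ht)
  have heqc : connectedComponentIn (Iset L) v₁ = connectedComponentIn (Iset L) a :=
    connectedComponentIn_eq ha
  have hmid : a + (2⁻¹ : ℝ) • (b - a) ∈ connectedComponentIn (Iset L) v₁ := by
    rw [heqc]
    exact hsub ⟨2⁻¹, ⟨by norm_num, by norm_num⟩, rfl⟩
  have h2 := Tcone hhom hmid (by norm_num : (0 : ℝ) < 2)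
  have heq2 : (2 : ℝ) • (a + (2⁻¹ : ℝ) • (b - a)) = a + b := by module
  rwa [heq2] at h2

set_option maxHeartbeats 1000000 in
private lemma Jsub (hC2 : ContDiffOn ℝ 2 L {(0 : V)}ᶜ)
    (hhom : ∀ s : ℝ, 0 < s → ∀ v, L (s • v) = s ^ 2 * L v)
    (hLor : ∀ v : V, v ≠ 0 → ∃ φ : V ≃ₗ[ℝ] ℝ × EuclideanSpace ℝ (Fin n),
      ∀ w u, FinslerHess L v w u = -((φ w).1 * (φ u).1) + (inner ℝ (φ w).2 (φ u).2 : ℝ))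
    {v₁ : V} (hv₁ : v₁ ∈ Iset L) :
    connectedComponentIn (Jset L) v₁ ⊆ closure (connectedComponentIn (Iset L) v₁) := by
  set T := connectedComponentIn (Iset L) v₁ with hT
  have hv₁J : v₁ ∈ Jset L := ⟨hv₁.1, hv₁.2.le⟩
  -- key local statement
  have key : ∀ w, w ∈ Jset L → w ∈ closure T →
      ∃ δ, 0 < δ ∧ ∀ w' ∈ ball w δ, w' ∈ Jset L → w' ∈ closure T := by
    intro w hwJ hwcl
    obtain ⟨hw0, hLw⟩ := hwJ
    obtain ⟨u, hu⟩ : ∃ u : V, fderiv ℝ L w u < 0 := by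
      by_contra hcon
      push_neg at hcon
      have hall : ∀ u : V, fderiv ℝ L w u = 0 := by
        intro u
        have h1 := hcon u
        have h2 := hcon (-u)
        rw [map_neg] at h2
        linarith
      exact hess_nondeg hLor hw0 fun u => by rw [euler2 hC2 hhom hw0 u]; exact hall u
    set α : ℝ := -(fderiv ℝ L w u) / 2 with hα
    have hαpos : 0 < α := by rw [hα]; linarith
    set Cb : ℝ := ‖fderiv ℝ L w‖ + 1 with hCb
    have hCbpos : 0 < Cb := by positivity
    have hcdL : ContinuousAt (fderiv ℝ L) w :=
      (contdL hC2).continuousAt (isOpen_compl_singleton.mem_nhds (mem0 hw0))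
    have e1 : {x : V | fderiv ℝ L x u < -α} ∈ 𝓝 w := by
      have hc : ContinuousAt (fun x => fderiv ℝ L x u) w :=
        ((ContinuousLinearMap.apply ℝ ℝ u).continuous.continuousAt).comp hcdL
      have hval : fderiv ℝ L w u < -α := by rw [hα]; linarith
      exact hc (Iio_mem_nhds hval)
    have e2 : {x : V | ‖fderiv ℝ L x‖ < Cb} ∈ 𝓝 w := by
      have hc : ContinuousAt (fun x => ‖fderiv ℝ L x‖) w :=
        continuous_norm.continuousAt.comp hcdL
      have hval : ‖fderiv ℝ L w‖ < Cb := by rw [hCb]; linarith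
      exact hc (Iio_mem_nhds hval)
    have e3 : {x : V | x ≠ (0 : V)} ∈ 𝓝 w := by
      rw [show {x : V | x ≠ (0 : V)} = ({(0 : V)}ᶜ : Set V) from by ext x; simp]
      exact isOpen_compl_singleton.mem_nhds (mem0 hw0)
    obtain ⟨r, hrpos, hrsub⟩ := Metric.mem_nhds_iff.mp (inter_mem (inter_mem e1 e2) e3)
    have hprop : ∀ x : V, dist x w < r →
        fderiv ℝ L x u < -α ∧ ‖fderiv ℝ L x‖ < Cb ∧ x ≠ 0 := by
      intro x hx
      have := hrsub (mem_ball.mpr hx)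
      exact ⟨this.1.1, this.1.2, this.2⟩
    set T0 : ℝ := r / (2 * (‖u‖ + 1)) with hT0def
    have hT0pos : 0 < T0 := by rw [hT0def]; positivity
    have hT0u : T0 * ‖u‖ ≤ r / 2 := by
      rw [hT0def, div_mul_eq_mul_div, div_le_div_iff₀ (by positivity) (by norm_num : (0:ℝ) < 2)]
      nlinarith [norm_nonneg u, hrpos]
    have hballpt : ∀ p : V, dist p w < r / 2 → ∀ τ ∈ Icc (0 : ℝ) T0,
        dist (p + τ • u) w < r := by
      intro p hp τ hτ
      have h1 : dist (p + τ • u) w ≤ dist (p + τ • u) p + dist p w := dist_triangle _ _ _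
      have h2 : dist (p + τ • u) p = τ * ‖u‖ := by
        rw [dist_eq_norm]
        have h3 : p + τ • u - p = τ • u := by abel
        rw [h3, norm_smul, Real.norm_eq_abs, abs_of_nonneg hτ.1]
      have h4 : τ * ‖u‖ ≤ T0 * ‖u‖ := mul_le_mul_of_nonneg_right hτ.2 (norm_nonneg u)
      linarith
    have hflow : ∀ p : V, dist p w < r / 2 → ∀ τ ∈ Icc (0 : ℝ) T0,
        L (p + τ • u) ≤ L p - τ * α := by
      intro p hp τ hτ
      have hsubIcc : Icc (0 : ℝ) τ ⊆ Icc (0 : ℝ) T0 := Icc_subset_Icc (le_refl 0) hτ.2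
      have hanti : AntitoneOn (fun σ : ℝ => L (p + σ • u) + σ * α) (Icc 0 τ) := by
        apply antitoneOn_of_deriv_nonpos (convex_Icc 0 τ)
        · apply ContinuousOn.add
          · apply ContinuousOn.comp (contL hC2)
              (continuous_const.add (continuous_id.smul continuous_const)).continuousOn
            intro σ hσ
            exact mem0 (hprop _ (hballpt p hp σ (hsubIcc hσ))).2.2
          · exact (continuous_id.mul continuous_const).continuousOn
        · intro σ hσ
          rw [interior_Icc] at hσ
          have hne := (hprop _ (hballpt p hp σ (hsubIcc ⟨hσ.1.le, hσ.2.le⟩))).2.2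
          exact ((lineDeriv hC2 hne).add (hasDerivAt_mul_const α)).differentiableAt.differentiableWithinAt
        · intro σ hσ
          rw [interior_Icc] at hσ
          have hmem := hprop _ (hballpt p hp σ (hsubIcc ⟨hσ.1.le, hσ.2.le⟩))
          have hder : HasDerivAt (fun σ : ℝ => L (p + σ • u) + σ * α)
              (fderiv ℝ L (p + σ • u) u + α) σ :=
            (lineDeriv hC2 hmem.2.2).add (hasDerivAt_mul_const α)
          rw [hder.deriv]
          linarith [hmem.1]
      have h0m : (0 : ℝ) ∈ Icc (0 : ℝ) τ := ⟨le_refl 0, hτ.1⟩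
      have hτm : τ ∈ Icc (0 : ℝ) τ := ⟨hτ.1, le_refl τ⟩
      have hres := hanti h0m hτm hτ.1
      simp only [zero_smul, add_zero, zero_mul] at hres
      linarith
    have hlip : ∀ p : V, dist p w < r / 2 → L p ≤ Cb * dist p w := by
      intro p hp
      have hdiff : ∀ x ∈ ball w (r / 2), DifferentiableAt ℝ L x := fun x hx =>
        (hasF hC2 (hprop x (lt_of_lt_of_le (mem_ball.mp hx) (by linarith))).2.2).differentiableAt
      have hbound : ∀ x ∈ ball w (r / 2), ‖fderiv ℝ L x‖ ≤ Cb := fun x hx =>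
        ((hprop x (lt_of_lt_of_le (mem_ball.mp hx) (by linarith))).2.1).le
      have hwmem : w ∈ ball w (r / 2) := mem_ball_self (by linarith)
      have hpmem : p ∈ ball w (r / 2) := mem_ball.mpr hp
      have hmvt := (convex_ball w (r / 2)).norm_image_sub_le_of_norm_fderiv_le
        hdiff hbound hwmem hpmem
      have h2 : L p - L w ≤ Cb * ‖p - w‖ :=
        le_trans (le_abs_self _) (by simpa [Real.norm_eq_abs] using hmvt)
      rw [dist_eq_norm]
      linarith
    set δ : ℝ := min (r / 4) (T0 * α / (Cb + 1)) with hδdef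
    have hδpos : 0 < δ := lt_min (by linarith) (by positivity)
    have hδr4 : δ ≤ r / 4 := min_le_left _ _
    have hδTα : Cb * δ < T0 * α := by
      have h1 : δ ≤ T0 * α / (Cb + 1) := min_le_right _ _
      have h2 : Cb * (T0 * α / (Cb + 1)) < T0 * α := by
        have hq := mul_pos hT0pos hαpos
        have hcb1 : (0 : ℝ) < Cb + 1 := by linarith
        rw [show Cb * (T0 * α / (Cb + 1)) = Cb * (T0 * α) / (Cb + 1) from by ring,
          div_lt_iff₀ hcb1]
        nlinarith
      calc Cb * δ ≤ Cb * (T0 * α / (Cb + 1)) := mul_le_mul_of_nonneg_left h1 hCbpos.le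
        _ < T0 * α := h2
    refine ⟨δ, hδpos, ?_⟩
    intro w' hw'ball hw'J
    rw [Metric.mem_closure_iff]
    intro ε hεpos
    obtain ⟨z, hzT, hzd⟩ := Metric.mem_closure_iff.mp hwcl δ hδpos
    have hzI : z ∈ Iset L := connectedComponentIn_subset _ _ hzT
    have hzw : dist z w < δ := by rw [dist_comm]; exact hzd
    have hw'w : dist w' w < δ := mem_ball.mp hw'ball
    set s0 : ℝ := min T0 (ε / (2 * (‖u‖ + 1))) with hs0def
    have hs0pos : 0 < s0 := lt_min hT0pos (by positivity)
    have hs0T0 : s0 ≤ T0 := min_le_left _ _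
    set q' : V := w' + s0 • u with hq'def
    -- the three path segments
    set im1 : Set V := (fun θ : ℝ => z + (θ * T0) • u) '' Icc 0 1 with him1
    set im2 : Set V := (fun θ : ℝ => (z + θ • (w' - z)) + T0 • u) '' Icc 0 1 with him2
    set im3 : Set V := (fun θ : ℝ => w' + (s0 + θ * (T0 - s0)) • u) '' Icc 0 1 with him3
    have hzr2 : dist z w < r / 2 := by
      have : δ ≤ r / 2 := le_trans hδr4 (by linarith)
      linarith
    have hw'r2 : dist w' w < r / 2 := by
      have : δ ≤ r / 2 := le_trans hδr4 (by linarith)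
      linarith
    have him1I : im1 ⊆ Iset L := by
      rintro _ ⟨θ, hθ, rfl⟩
      have hτ : θ * T0 ∈ Icc (0 : ℝ) T0 := by
        constructor
        · exact mul_nonneg hθ.1 hT0pos.le
        · nlinarith [hθ.2, hT0pos]
      refine ⟨(hprop _ (hballpt z hzr2 _ hτ)).2.2, ?_⟩
      have := hflow z hzr2 _ hτ
      nlinarith [hzI.2, mul_nonneg (mul_nonneg hθ.1 hT0pos.le) hαpos.le]
    have him2I : im2 ⊆ Iset L := by
      rintro _ ⟨θ, hθ, rfl⟩
      set m : V := z + θ • (w' - z) with hm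
      have hmw : dist m w < δ := by
        rw [hm, dist_eq_norm]
        have hcomb : z + θ • (w' - z) - w = (1 - θ) • (z - w) + θ • (w' - w) := by module
        rw [hcomb]
        calc ‖(1 - θ) • (z - w) + θ • (w' - w)‖
            ≤ ‖(1 - θ) • (z - w)‖ + ‖θ • (w' - w)‖ := norm_add_le _ _
          _ = (1 - θ) * ‖z - w‖ + θ * ‖w' - w‖ := by
              rw [norm_smul, norm_smul, Real.norm_eq_abs, Real.norm_eq_abs,
                abs_of_nonneg (by linarith [hθ.2]), abs_of_nonneg hθ.1]
          _ < δ := by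
              rw [dist_eq_norm] at hzw hw'w
              have h3 : (1 - θ) * δ + θ * δ = δ := by ring
              rcases le_or_gt θ (1 / 2) with hhalf | hhalf
              · have h1 : (1 - θ) * ‖z - w‖ < (1 - θ) * δ :=
                  mul_lt_mul_of_pos_left hzw (by linarith)
                have h2 : θ * ‖w' - w‖ ≤ θ * δ := mul_le_mul_of_nonneg_left hw'w.le hθ.1
                linarith
              · have h1 : (1 - θ) * ‖z - w‖ ≤ (1 - θ) * δ :=
                  mul_le_mul_of_nonneg_left hzw.le (by linarith [hθ.2])
                have h2 : θ * ‖w' - w‖ < θ * δ := mul_lt_mul_of_pos_left hw'w (by linarith)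
                linarith
      have hmr2 : dist m w < r / 2 := by
        have : δ ≤ r / 2 := le_trans hδr4 (by linarith)
        linarith
      have hT0m : T0 ∈ Icc (0 : ℝ) T0 := ⟨hT0pos.le, le_refl T0⟩
      refine ⟨(hprop _ (hballpt m hmr2 _ hT0m)).2.2, ?_⟩
      have h1 := hflow m hmr2 T0 hT0m
      have h2 := hlip m hmr2
      have h3 : Cb * dist m w ≤ Cb * δ := mul_le_mul_of_nonneg_left hmw.le hCbpos.le
      linarith
    have him3I : im3 ⊆ Iset L := by
      rintro _ ⟨θ, hθ, rfl⟩
      have hτ : s0 + θ * (T0 - s0) ∈ Icc (0 : ℝ) T0 := by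
        constructor
        · nlinarith [hθ.1, hs0pos, hs0T0]
        · nlinarith [hθ.2, hs0T0]
      refine ⟨(hprop _ (hballpt w' hw'r2 _ hτ)).2.2, ?_⟩
      have h1 := hflow w' hw'r2 _ hτ
      have h2 : s0 * α ≤ (s0 + θ * (T0 - s0)) * α := by
        apply mul_le_mul_of_nonneg_right _ hαpos.le
        nlinarith [hθ.1, hs0T0]
      nlinarith [hw'J.2, mul_pos hs0pos hαpos]
    have hpre1 : IsPreconnected im1 := isPreconnected_Icc.image _
      (Continuous.continuousOn (continuous_const.add ((continuous_id.mul continuous_const).smul continuous_const)))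
    have hpre2 : IsPreconnected im2 := isPreconnected_Icc.image _
      (Continuous.continuousOn ((continuous_const.add (continuous_id.smul continuous_const)).add continuous_const))
    have hpre3 : IsPreconnected im3 := isPreconnected_Icc.image _
      (Continuous.continuousOn (continuous_const.add
        ((continuous_const.add (continuous_id.mul continuous_const)).smul continuous_const)))
    have hc1 : z + T0 • u ∈ im1 := by
      refine ⟨1, ⟨zero_le_one, le_refl 1⟩, ?_⟩
      show z + ((1 : ℝ) * T0) • u = z + T0 • u
      rw [one_mul]
    have hc1' : z + T0 • u ∈ im2 := by
      refine ⟨0, ⟨le_refl 0, zero_le_one⟩, ?_⟩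
      show z + (0 : ℝ) • (w' - z) + T0 • u = z + T0 • u
      rw [zero_smul, add_zero]
    have hc2 : w' + T0 • u ∈ im2 := by
      refine ⟨1, ⟨zero_le_one, le_refl 1⟩, ?_⟩
      show z + (1 : ℝ) • (w' - z) + T0 • u = w' + T0 • u
      rw [one_smul]; abel
    have hc2' : w' + T0 • u ∈ im3 := by
      refine ⟨1, ⟨zero_le_one, le_refl 1⟩, ?_⟩
      show w' + (s0 + 1 * (T0 - s0)) • u = w' + T0 • u
      rw [show s0 + 1 * (T0 - s0) = T0 from by ring]
    have hzmem : z ∈ im1 := by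
      refine ⟨0, ⟨le_refl 0, zero_le_one⟩, ?_⟩
      show z + ((0 : ℝ) * T0) • u = z
      rw [zero_mul, zero_smul, add_zero]
    have hq'mem : q' ∈ im3 := by
      refine ⟨0, ⟨le_refl 0, zero_le_one⟩, ?_⟩
      show w' + (s0 + 0 * (T0 - s0)) • u = q'
      rw [show s0 + 0 * (T0 - s0) = s0 from by ring, hq'def]
    have hpre12 : IsPreconnected (im1 ∪ im2) :=
      IsPreconnected.union (z + T0 • u) hc1 hc1' hpre1 hpre2
    have hpreW : IsPreconnected ((im1 ∪ im2) ∪ im3) :=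
      IsPreconnected.union (w' + T0 • u) (Or.inr hc2) hc2' hpre12 hpre3
    have hWsub : (im1 ∪ im2) ∪ im3 ⊆ Iset L := by
      rintro x ((hx | hx) | hx)
      · exact him1I hx
      · exact him2I hx
      · exact him3I hx
    have hWT := hpreW.subset_connectedComponentIn (Or.inl (Or.inl hzmem)) hWsub
    have hq'T : q' ∈ T := by
      rw [hT, connectedComponentIn_eq hzT]
      exact hWT (Or.inr hq'mem)
    refine ⟨q', hq'T, ?_⟩
    have hdist : dist w' q' = s0 * ‖u‖ := by
      rw [hq'def, dist_eq_norm]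
      have h1 : w' - (w' + s0 • u) = -(s0 • u) := by abel
      rw [h1, norm_neg, norm_smul, Real.norm_eq_abs, abs_of_pos hs0pos]
    rw [hdist]
    have hs0le : s0 ≤ ε / (2 * (‖u‖ + 1)) := min_le_right _ _
    have h2 : s0 * ‖u‖ ≤ (ε / (2 * (‖u‖ + 1))) * ‖u‖ :=
      mul_le_mul_of_nonneg_right hs0le (norm_nonneg u)
    have h3 : (ε / (2 * (‖u‖ + 1))) * ‖u‖ < ε := by
      rw [div_mul_eq_mul_div, div_lt_iff₀ (by positivity)]
      nlinarith [norm_nonneg u, hεpos]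
    linarith
  -- preconnectedness argument over the causal component
  have hJc_pre : IsPreconnected (connectedComponentIn (Jset L) v₁) :=
    (isConnected_connectedComponentIn_iff.mpr hv₁J).isPreconnected
  by_contra hnot
  rw [not_subset] at hnot
  obtain ⟨w₀, hw₀Jc, hw₀n⟩ := hnot
  have hch : ∀ w : V, ∃ δ : ℝ, 0 < δ ∧
      ((w ∈ Jset L ∧ w ∈ closure T) → ∀ w' ∈ ball w δ, w' ∈ Jset L → w' ∈ closure T) := by
    intro w
    by_cases h : w ∈ Jset L ∧ w ∈ closure T
    · obtain ⟨δ, hδ, hp⟩ := key w h.1 h.2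
      exact ⟨δ, hδ, fun _ => hp⟩
    · exact ⟨1, one_pos, fun hc => absurd hc h⟩
  choose δf hδf using hch
  set Uo : Set V := ⋃ (w : V) (_ : w ∈ Jset L ∧ w ∈ closure T), ball w (δf w) with hUo
  have hUoOpen : IsOpen Uo := isOpen_iUnion fun w => isOpen_iUnion fun _ => isOpen_ball
  set Vo : Set V := (closure T)ᶜ with hVo
  have hVoOpen : IsOpen Vo := isClosed_closure.isOpen_compl
  have hJU : connectedComponentIn (Jset L) v₁ ∩ Uo ⊆ closure T := by
    rintro x ⟨hxJc, hxU⟩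
    simp only [hUo, mem_iUnion] at hxU
    obtain ⟨w, hw, hx⟩ := hxU
    exact (hδf w).2 hw x hx (connectedComponentIn_subset _ _ hxJc)
  have hcover : connectedComponentIn (Jset L) v₁ ⊆ Uo ∪ Vo := by
    intro w hw
    by_cases h : w ∈ closure T
    · left
      simp only [hUo, mem_iUnion]
      exact ⟨w, ⟨connectedComponentIn_subset _ _ hw, h⟩, mem_ball_self (hδf w).1⟩
    · right; exact h
  have hUne : (connectedComponentIn (Jset L) v₁ ∩ Uo).Nonempty := by
    refine ⟨v₁, mem_connectedComponentIn hv₁J, ?_⟩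
    simp only [hUo, mem_iUnion]
    exact ⟨v₁, ⟨hv₁J, subset_closure (mem_connectedComponentIn hv₁)⟩,
      mem_ball_self (hδf v₁).1⟩
  have hVne : (connectedComponentIn (Jset L) v₁ ∩ Vo).Nonempty := ⟨w₀, hw₀Jc, hw₀n⟩
  obtain ⟨x, hxJc, hxU, hxV⟩ := hJc_pre Uo Vo hUoOpen hVoOpen hcover hUne hVne
  exact hxV (hJU ⟨hxJc, hxU⟩)

end Sum

end LorentzProof

/-- The sum of a timelike and a causal vector in the same component is timelike and lies
in `Iᵅ = Int Jᵅ`. -/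
theorem timelike_add_causal (n : ℕ) (L : EuclideanSpace ℝ (Fin (n + 1)) → ℝ)
    (hC2 : ContDiffOn ℝ 2 L {(0 : EuclideanSpace ℝ (Fin (n + 1)))}ᶜ)
    (hhom : ∀ s : ℝ, 0 < s → ∀ v, L (s • v) = s ^ 2 * L v)
    (hLor : ∀ v : EuclideanSpace ℝ (Fin (n + 1)), v ≠ 0 →
      ∃ φ : EuclideanSpace ℝ (Fin (n + 1)) ≃ₗ[ℝ] ℝ × EuclideanSpace ℝ (Fin n),
        ∀ w u, FinslerHess L v w u
          = -((φ w).1 * (φ u).1) + (inner ℝ (φ w).2 (φ u).2 : ℝ))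
    (v₁ v₂ : EuclideanSpace ℝ (Fin (n + 1))) (hv₁ : v₁ ∈ {v : EuclideanSpace ℝ (Fin (n + 1)) | v ≠ 0 ∧ FinslerHess L v v v ≤ 0})
    (ht : FinslerHess L v₁ v₁ v₁ < 0)
    (hv₂ : v₂ ∈ connectedComponentIn {v : EuclideanSpace ℝ (Fin (n + 1)) | v ≠ 0 ∧ FinslerHess L v v v ≤ 0} v₁) :
    FinslerHess L (v₁ + v₂) (v₁ + v₂) (v₁ + v₂) < 0 ∧
      v₁ + v₂ ∈ interior (connectedComponentIn {v : EuclideanSpace ℝ (Fin (n + 1)) | v ≠ 0 ∧ FinslerHess L v v v ≤ 0} v₁) := by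
  classical
  have hv₁0 : v₁ ≠ 0 := hv₁.1
  have hLv₁ : L v₁ < 0 := by
    have h := LorentzProof.hess_self hC2 hhom hv₁0
    linarith [ht, h.symm.trans_lt ht]
  have hv₁I : v₁ ∈ LorentzProof.Iset L := ⟨hv₁0, hLv₁⟩
  have hJset : {v : EuclideanSpace ℝ (Fin (n + 1)) | v ≠ 0 ∧ FinslerHess L v v v ≤ 0}
      = LorentzProof.Jset L := by
    ext v
    constructor
    · rintro ⟨hv0, hle⟩
      exact ⟨hv0, by have := LorentzProof.hess_self hC2 hhom hv0; linarith⟩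
    · rintro ⟨hv0, hle⟩
      exact ⟨hv0, by have := LorentzProof.hess_self hC2 hhom hv0; linarith⟩
  rw [hJset] at hv₂
  set T := connectedComponentIn (LorentzProof.Iset L) v₁ with hT
  have hv₂cl : v₂ ∈ closure T := LorentzProof.Jsub hC2 hhom hLor hv₁I hv₂
  have hv₁T : v₁ ∈ T := mem_connectedComponentIn hv₁I
  have hTopen : IsOpen T := (LorentzProof.Iopen hC2).connectedComponentIn
  obtain ⟨ε, hεpos, hball⟩ := Metric.isOpen_iff.mp hTopen v₁ hv₁T
  obtain ⟨b, hbT, hbd⟩ := Metric.mem_closure_iff.mp hv₂cl ε hεpos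
  have h1 : v₁ + (v₂ - b) ∈ T := by
    apply hball
    rw [Metric.mem_ball, dist_eq_norm]
    have heq : v₁ + (v₂ - b) - v₁ = v₂ - b := by abel
    rw [heq]
    rw [dist_eq_norm] at hbd
    exact hbd
  have hsum : v₁ + (v₂ - b) + b ∈ T := LorentzProof.Tadd hC2 hhom hLor hv₁I h1 hbT
  have hadd : v₁ + v₂ ∈ T := by
    have heq : v₁ + (v₂ - b) + b = v₁ + v₂ := by abel
    rwa [heq] at hsum
  have hIadd : v₁ + v₂ ∈ LorentzProof.Iset L := connectedComponentIn_subset _ _ hadd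
  constructor
  · have h := LorentzProof.hess_self hC2 hhom hIadd.1
    rw [h]; linarith [hIadd.2]
  · rw [hJset]
    have hTJc : T ⊆ connectedComponentIn (LorentzProof.Jset L) v₁ :=
      (isConnected_connectedComponentIn_iff.mpr hv₁I).isPreconnected.subset_connectedComponentIn
        hv₁T (fun x hx => ⟨(connectedComponentIn_subset _ _ hx).1,
          (connectedComponentIn_subset _ _ hx).2.le⟩)
    exact interior_maximal hTJc hTopen hadd
end
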